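/- arXiv:math/0601484 — 14 statements merged into one kernel-verified Lean document; each statement's English description precedes it below -/
import Mathlib

section
/- Let V be a finite-dimensional real inner product space, p ≥ 1, let φ be an alternating p-form on V of comass at most one, let A be a linear endomorphism of V, and let e = (e_1,…,e_p) be a φ-plane. Then (λ_φ A)(e_1,…,e_p) = Σ_{j=1}^p ⟨A e_j, e_j⟩; that is, Σ_{j=1}^p φ(e_1,…,e_{j−1}, A e_j, e_{j+1},…,e_p) = Σ_{j=1}^p ⟨A e_j, e_j⟩ (the value of λ_φ(A) on a φ-plane equals the trace of A restricted to that plane). -/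
open scoped RealInnerProductSpace

/-- If `w` is orthogonal to all the `e i` and the orthonormal tuple `e` achieves the maximal
value `1` of a comass-`≤ 1` form `φ`, then replacing `e j` by `w` gives value `0`. -/
lemma phi_update_orthogonal_eq_zero
    {V : Type*} [NormedAddCommGroup V] [InnerProductSpace ℝ V] {p : ℕ}
    (φ : V [⋀^Fin p]→ₗ[ℝ] ℝ)
    (hcomass : ∀ u : Fin p → V, Orthonormal ℝ u → φ u ≤ 1)
    (e : Fin p → V) (he : Orthonormal ℝ e) (heφ : φ e = 1)
    (j : Fin p) (w : V) (hw : ∀ i, ⟪e i, w⟫ = 0) :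
    φ (Function.update e j w) = 0 := by
  rcases eq_or_ne w 0 with rfl | hw0
  · exact φ.toMultilinearMap.map_update_zero e j
  have hnorm : ‖w‖ ≠ 0 := norm_ne_zero_iff.mpr hw0
  have hw'norm : ‖(‖w‖⁻¹ • w)‖ = 1 := by
    rw [norm_smul, norm_inv, norm_norm, inv_mul_cancel₀ hnorm]
  have hw'orth : ∀ i, ⟪e i, ‖w‖⁻¹ • w⟫ = 0 := by
    intro i
    rw [real_inner_smul_right, hw i, mul_zero]
  have hew : ∀ i k : Fin p, i ≠ k → ⟪e i, e k⟫ = 0 := fun i k hik => he.2 hik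
  have henorm : ∀ i, ‖e i‖ = 1 := fun i => he.1 i
  set c : ℝ := φ (Function.update e j (‖w‖⁻¹ • w)) with hc
  -- key inequality: for all a b with a² + b² = 1, a + b * c ≤ 1
  have key : ∀ a b : ℝ, a ^ 2 + b ^ 2 = 1 → a + b * c ≤ 1 := by
    intro a b hab
    have hon : Orthonormal ℝ (Function.update e j (a • e j + b • (‖w‖⁻¹ • w))) := by
      rw [orthonormal_iff_ite]
      intro i k
      by_cases hik : i = j <;> by_cases hkj : k = j
      · rw [hik, hkj, Function.update_self, if_pos rfl]
        have e1 : ⟪a • e j, a • e j⟫ = a * a := by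
          rw [real_inner_smul_left, real_inner_smul_right,
            real_inner_self_eq_norm_sq, henorm j]; ring
        have e2 : ⟪a • e j, b • (‖w‖⁻¹ • w)⟫ = 0 := by
          rw [real_inner_smul_left, real_inner_smul_right, hw'orth j]; ring
        have e2b : ⟪b • (‖w‖⁻¹ • w), a • e j⟫ = 0 := by
          rw [real_inner_smul_left, real_inner_smul_right, real_inner_comm, hw'orth j]; ring
        have e3 : ⟪b • (‖w‖⁻¹ • w), b • (‖w‖⁻¹ • w)⟫ = b * b := by
          rw [real_inner_smul_left, real_inner_smul_right,
            real_inner_self_eq_norm_sq, hw'norm]; ring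
        rw [inner_add_add_self, e1, e2, e2b, e3]
        nlinarith [hab]
      · rw [hik]
        rw [Function.update_self, Function.update_of_ne hkj,
          if_neg (show ¬ j = k from Ne.symm hkj),
          inner_add_left, real_inner_smul_left, real_inner_smul_left,
          hew j k (Ne.symm hkj), real_inner_smul_left, real_inner_comm, hw k]
        ring
      · rw [hkj]
        rw [Function.update_self, Function.update_of_ne hik, if_neg hik,
          inner_add_right, real_inner_smul_right, real_inner_smul_right,
          hew i j hik, hw'orth i]
        ring
      · rw [Function.update_of_ne hik, Function.update_of_ne hkj]
        exact orthonormal_iff_ite.mp he i k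
    have hval : φ (Function.update e j (a • e j + b • (‖w‖⁻¹ • w)))
        = a * φ e + b * c := by
      rw [AlternatingMap.map_update_add, AlternatingMap.map_update_smul,
        AlternatingMap.map_update_smul, Function.update_eq_self]
      rfl
    have := hcomass _ hon
    rw [hval, heφ, mul_one] at this
    exact this
  -- apply with a = 1/√(1+c²), b = c/√(1+c²)
  have hs : (0:ℝ) < Real.sqrt (1 + c ^ 2) := Real.sqrt_pos.mpr (by positivity)
  have hs2 : Real.sqrt (1 + c ^ 2) ^ 2 = 1 + c ^ 2 := Real.sq_sqrt (by positivity)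
  have h1 := key (1 / Real.sqrt (1 + c ^ 2)) (c / Real.sqrt (1 + c ^ 2)) (by
    rw [div_pow, div_pow, hs2, one_pow, ← add_div, div_self (by positivity : (1:ℝ) + c ^ 2 ≠ 0)])
  have h2 : (1 + c ^ 2) / Real.sqrt (1 + c ^ 2) ≤ 1 := by
    calc (1 + c ^ 2) / Real.sqrt (1 + c ^ 2)
        = 1 / Real.sqrt (1 + c ^ 2) + c / Real.sqrt (1 + c ^ 2) * c := by ring
      _ ≤ 1 := h1
  have h3 : 1 + c ^ 2 ≤ Real.sqrt (1 + c ^ 2) := by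
    rwa [div_le_one hs] at h2
  have hc2 : c ^ 2 ≤ 0 := by nlinarith [hs, hs2, h3]
  have hc0 : c = 0 := by nlinarith [sq_nonneg c]
  -- conclude by linearity
  have hws : w = ‖w‖ • (‖w‖⁻¹ • w) := by
    rw [smul_smul, mul_inv_cancel₀ hnorm, one_smul]
  calc φ (Function.update e j w) = φ (Function.update e j (‖w‖ • (‖w‖⁻¹ • w))) := by
        rw [← hws]
    _ = ‖w‖ • φ (Function.update e j (‖w‖⁻¹ • w)) := AlternatingMap.map_update_smul ..
    _ = ‖w‖ • c := by rw [← hc]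
    _ = 0 := by rw [hc0, smul_zero]

/-- The value of `φ` with slot `j` replaced by an arbitrary vector `v`. -/
lemma phi_update_eq_inner
    {V : Type*} [NormedAddCommGroup V] [InnerProductSpace ℝ V] {p : ℕ}
    (φ : V [⋀^Fin p]→ₗ[ℝ] ℝ)
    (hcomass : ∀ u : Fin p → V, Orthonormal ℝ u → φ u ≤ 1)
    (e : Fin p → V) (he : Orthonormal ℝ e) (heφ : φ e = 1)
    (j : Fin p) (v : V) :
    φ (Function.update e j v) = ⟪v, e j⟫ := by
  have hw : ∀ i, ⟪e i, v - ∑ k, ⟪v, e k⟫ • e k⟫ = 0 := by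
    intro i
    rw [inner_sub_right, he.inner_right_fintype (fun k => ⟪v, e k⟫) i,
      real_inner_comm, sub_self]
  have hdecomp : v = (∑ k, ⟪v, e k⟫ • e k) + (v - ∑ k, ⟪v, e k⟫ • e k) := by abel
  have hψ : ∀ x : V, φ (Function.update e j x) = φ.toMultilinearMap.toLinearMap e j x :=
    fun _ => rfl
  rw [hψ]
  conv_lhs => rw [hdecomp]
  rw [map_add, map_sum]
  have hzero : (φ.toMultilinearMap.toLinearMap e j) (v - ∑ k, ⟪v, e k⟫ • e k) = 0 := by
    rw [← hψ]
    exact phi_update_orthogonal_eq_zero φ hcomass e he heφ j _ hw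
  rw [hzero, add_zero]
  have hterm : ∀ i, (φ.toMultilinearMap.toLinearMap e j) (⟪v, e i⟫ • e i)
      = if i = j then ⟪v, e j⟫ else 0 := by
    intro i
    rw [map_smul]
    by_cases hij : i = j
    · subst hij
      rw [if_pos rfl]
      have h : (φ.toMultilinearMap.toLinearMap e i) (e i) = φ e := by
        rw [← hψ]; rw [Function.update_eq_self]
      rw [h, heφ, smul_eq_mul, mul_one]
    · rw [if_neg hij]
      have h : (φ.toMultilinearMap.toLinearMap e j) (e i) = 0 := by
        rw [← hψ]
        exact φ.map_eq_zero_of_eq _ (i := i) (j := j)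
          (by rw [Function.update_of_ne hij, Function.update_self]) hij
      rw [h, smul_zero]
  rw [Finset.sum_congr rfl (fun i _ => hterm i),
    Finset.sum_ite_eq' Finset.univ j (fun _ => ⟪v, e j⟫), if_pos (Finset.mem_univ j)]

/-- **Theorem 2.3** (Harvey–Lawson, "Plurisubharmonic functions in calibrated geometries").
The value of `λ_φ(A)` on a `φ`-plane equals the trace of `A` restricted to that plane. -/
theorem lambda_phi_eq_trace_on_phi_plane
    {V : Type*} [NormedAddCommGroup V] [InnerProductSpace ℝ V]
    [FiniteDimensional ℝ V] {p : ℕ} (hp : 1 ≤ p)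
    (φ : V [⋀^Fin p]→ₗ[ℝ] ℝ)
    (hcomass : ∀ u : Fin p → V, Orthonormal ℝ u → φ u ≤ 1)
    (A : V →ₗ[ℝ] V) (e : Fin p → V)
    (he : Orthonormal ℝ e) (heφ : φ e = 1) :
    ∑ j, φ (Function.update e j (A (e j))) = ∑ j, ⟪A (e j), e j⟫ := by
  exact Finset.sum_congr rfl fun j _ =>
    phi_update_eq_inner φ hcomass e he heφ j (A (e j))
end

section
/- Let V be a finite-dimensional real inner product space, p ≥ 1, let φ be an alternating p-form on V of comass at most one, and let e = (e_1,…,e_p) be a φ-plane. Then for every vector b ∈ V orthogonal to each of e_1,…,e_p and for every index i ∈ {1,…,p}, φ(e_1,…,e_{i−1}, b, e_{i+1},…,e_p) = 0; that is, φ vanishes on every first cousin of the φ-plane (the First Cousin Principle). -/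
open scoped RealInnerProductSpace

/-- **Lemma 2.4 (The First Cousin Principle)** (Harvey–Lawson).
A comass-one form `φ` vanishes on every first cousin of a `φ`-plane: replacing one vector
of a `φ`-plane by a vector orthogonal to the plane gives a `p`-tuple on which `φ` is zero. -/
theorem first_cousin_principle
    {V : Type*} [NormedAddCommGroup V] [InnerProductSpace ℝ V]
    [FiniteDimensional ℝ V] {p : ℕ} (hp : 1 ≤ p)
    (φ : V [⋀^Fin p]→ₗ[ℝ] ℝ)
    (hcomass : ∀ u : Fin p → V, Orthonormal ℝ u → φ u ≤ 1)
    (e : Fin p → V) (he : Orthonormal ℝ e) (heφ : φ e = 1)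
    (b : V) (hb : ∀ j, ⟪b, e j⟫ = 0) (i : Fin p) :
    φ (Function.update e i b) = 0 := by
  classical
  have hee : ∀ j k, ⟪e j, e k⟫ = if j = k then (1:ℝ) else 0 := orthonormal_iff_ite.mp he
  by_cases hb0 : b = 0
  · simp [hb0]
  · have hbnorm : ‖b‖ ≠ 0 := norm_ne_zero_iff.mpr hb0
    set β : V := ‖b‖⁻¹ • b with hβ
    have hββ : ⟪β, β⟫ = (1:ℝ) := by
      rw [hβ, real_inner_smul_left, real_inner_smul_right, real_inner_self_eq_norm_sq]
      field_simp
    have hβe : ∀ j, ⟪β, e j⟫ = 0 := by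
      intro j
      rw [hβ, real_inner_smul_left, hb j, mul_zero]
    have heβ : ∀ j, ⟪e j, β⟫ = 0 := fun j => by rw [real_inner_comm]; exact hβe j
    set c : ℝ := φ (Function.update e i β) with hc
    have hmain : φ (Function.update e i b) = ‖b‖ * c := by
      have hbb : b = ‖b‖ • β := by
        rw [hβ, smul_smul, mul_inv_cancel₀ hbnorm, one_smul]
      calc φ (Function.update e i b) = φ (Function.update e i (‖b‖ • β)) := by rw [← hbb]
        _ = ‖b‖ • φ (Function.update e i β) := φ.map_update_smul e i ‖b‖ β
        _ = ‖b‖ * c := by rw [hc, smul_eq_mul]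
    have hczero : c = 0 := by
      set d := Real.sqrt (1 + c^2) with hd
      have hd2 : d^2 = 1 + c^2 := Real.sq_sqrt (by positivity)
      have hdpos : 0 < d := Real.sqrt_pos.mpr (by positivity)
      set v : V := (1/d) • e i + (c/d) • β with hv
      have hvv : ⟪v, v⟫ = 1 := by
        simp only [hv, inner_add_left, inner_add_right, real_inner_smul_left,
          real_inner_smul_right, hββ, hβe, heβ, hee i i, if_pos rfl, ↓reduceIte]
        field_simp
        nlinarith [hd2]
      have hve : ∀ k, k ≠ i → ⟪v, e k⟫ = 0 := by
        intro k hk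
        simp [hv, inner_add_left, real_inner_smul_left, hee i k,
          (Ne.symm hk : ¬ i = k), hβe]
      have hev : ∀ k, k ≠ i → ⟪e k, v⟫ = 0 := fun k hk => by
        rw [real_inner_comm]; exact hve k hk
      have hu : Orthonormal ℝ (Function.update e i v) := by
        rw [orthonormal_iff_ite]
        intro j k
        by_cases hji : j = i <;> by_cases hki : k = i
        · subst hji; subst hki
          simpa using hvv
        · subst hji
          rw [Function.update_self, Function.update_of_ne hki, hve k hki,
            if_neg (fun h => hki h.symm)]
        · subst hki
          rw [Function.update_self, Function.update_of_ne hji, hev j hji, if_neg hji]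
        · rw [Function.update_of_ne hji, Function.update_of_ne hki, hee j k]
      have hle : φ (Function.update e i v) ≤ 1 := hcomass _ hu
      have hval : φ (Function.update e i v) = 1/d + (c/d) * c := by
        rw [hv, φ.map_update_add, φ.map_update_smul, φ.map_update_smul, Function.update_eq_self, heφ, ← hc]
        simp [smul_eq_mul]
      rw [hval] at hle
      have hdle : d ≤ 1 := by
        have : (1 + c^2) / d ≤ 1 := by
          have : 1/d + (c/d) * c = (1 + c^2)/d := by ring
          linarith [hle, this ▸ hle]
        calc d = d^2 / d := by rw [pow_two, mul_div_assoc, div_self hdpos.ne', mul_one]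
          _ = (1 + c^2)/d := by rw [hd2]
          _ ≤ 1 := this
      nlinarith [hd2]
    rw [hmain, hczero, mul_zero]
end

section
/- Let V be a finite-dimensional real inner product space, p ≥ 1, let φ be an alternating p-form on V, and let e = (e_1,…,e_p) be an orthonormal p-tuple that is φ-critical, i.e. φ(e_1,…,e_{i−1}, b, e_{i+1},…,e_p) = 0 for every index i and every vector b orthogonal to span{e_1,…,e_p}. Then for every linear endomorphism A of V, (λ_φ A)(e_1,…,e_p) = (Σ_{j=1}^p ⟨A e_j, e_j⟩) · φ(e_1,…,e_p). -/
open scoped RealInnerProductSpace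

/-- **Proposition 2.A.2** (Harvey–Lawson).  If the orthonormal `p`-tuple `e` is `φ`-critical
(i.e. `φ` vanishes on all first cousins of `e`), then for every endomorphism `A`,
`(λ_φ A)(e) = (tr_e A) · φ(e)`. -/
theorem lambda_phi_on_phi_critical
    {V : Type*} [NormedAddCommGroup V] [InnerProductSpace ℝ V]
    [FiniteDimensional ℝ V] {p : ℕ} (hp : 1 ≤ p)
    (φ : V [⋀^Fin p]→ₗ[ℝ] ℝ)
    (e : Fin p → V) (he : Orthonormal ℝ e)
    (hcrit : ∀ (i : Fin p) (b : V), (∀ j, ⟪b, e j⟫ = 0) →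
      φ (Function.update e i b) = 0)
    (A : V →ₗ[ℝ] V) :
    ∑ j, φ (Function.update e j (A (e j))) = (∑ j, ⟪A (e j), e j⟫) * φ e := by
  rw [Finset.sum_mul]
  apply Finset.sum_congr rfl
  intro j _
  set c : Fin p → ℝ := fun k => ⟪A (e j), e k⟫ with hc
  set b : V := A (e j) - ∑ k, c k • e k with hb
  have horth : ∀ l, ⟪b, e l⟫ = 0 := by
    intro l
    rw [hb, inner_sub_left, sum_inner]
    have : ∀ k ∈ Finset.univ, ⟪c k • e k, e l⟫ = if k = l then c l else 0 := by
      intro k _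
      rw [real_inner_smul_left, orthonormal_iff_ite.mp he k l]
      split <;> simp_all
    rw [Finset.sum_congr rfl this, Finset.sum_ite_eq' Finset.univ l]
    simp [hc]
  have hAe : A (e j) = (∑ k, c k • e k) + b := by rw [hb]; abel
  conv_lhs => rw [hAe]
  rw [φ.map_update_add, hcrit j b horth, add_zero, φ.map_update_sum]
  have : ∀ k ∈ Finset.univ, φ (Function.update e j (c k • e k))
      = if k = j then c j * φ e else 0 := by
    intro k _
    rw [φ.map_update_smul]
    split
    · subst ‹k = j›; rw [Function.update_eq_self, smul_eq_mul]
    · rw [φ.map_eq_zero_of_eq (Function.update e j (e k)) (i := j) (j := k)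
        (by simp [Function.update_of_ne ‹k ≠ j›]) (Ne.symm ‹k ≠ j›)]
      simp
  rw [Finset.sum_congr rfl this, Finset.sum_ite_eq' Finset.univ j]
  simp [hc, smul_eq_mul]
end

section
/- Let V be a finite-dimensional real inner product space, p ≥ 1, let φ be an alternating p-form on V, let A be a linear endomorphism of V, and let e = (e_1,…,e_p) be any orthonormal p-tuple of vectors of V. Let Q denote the orthogonal projection of V onto the orthogonal complement of span{e_1,…,e_p}. Then (λ_φ A)(e_1,…,e_p) = (Σ_{j=1}^p ⟨A e_j, e_j⟩) · φ(e_1,…,e_p) + Σ_{j=1}^p φ(e_1,…,e_{j−1}, Q(A e_j), e_{j+1},…,e_p). -/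
open scoped RealInnerProductSpace

lemma phi_update_span {V : Type*} [NormedAddCommGroup V] [InnerProductSpace ℝ V]
    {p : ℕ} (φ : V [⋀^Fin p]→ₗ[ℝ] ℝ) (e : Fin p → V) (he : Orthonormal ℝ e)
    (j : Fin p) (y : V) (hy : y ∈ Submodule.span ℝ (Set.range e)) :
    φ (Function.update e j y) = ⟪y, e j⟫ * φ e := by
  induction hy using Submodule.span_induction with
  | mem x hx =>
    obtain ⟨i, rfl⟩ := hx
    by_cases hij : i = j
    · subst hij
      simp [Function.update_eq_self, real_inner_self_eq_norm_sq, he.1 i]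
    · rw [φ.map_eq_zero_of_eq (Function.update e j (e i)) (i := i) (j := j)]
      · rw [he.2 hij]; simp
      · simp [Function.update_of_ne hij, Function.update_self]
      · exact hij
  | zero => simp
  | add x z hx hz ihx ihz =>
    rw [φ.map_update_add, ihx, ihz, inner_add_left]; ring
  | smul c x hx ih =>
    rw [φ.map_update_smul, ih, real_inner_smul_left]
    simp; ring

/-- **Proposition 2.A.4** (Harvey–Lawson).  For any alternating `p`-form `φ`, any endomorphism
`A` and any orthonormal `p`-tuple `e`:
`λ_φ(A)(e) = (tr_e A)·φ(e) + Σ_j φ(e_1,…,Q(A e_j),…,e_p)`, where `Q` is the orthogonal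
projection onto the orthogonal complement of `span{e_1,…,e_p}`. -/
theorem lambda_phi_general_formula
    {V : Type*} [NormedAddCommGroup V] [InnerProductSpace ℝ V]
    [FiniteDimensional ℝ V] {p : ℕ} (hp : 1 ≤ p)
    (φ : V [⋀^Fin p]→ₗ[ℝ] ℝ)
    (A : V →ₗ[ℝ] V) (e : Fin p → V) (he : Orthonormal ℝ e) :
    ∑ j, φ (Function.update e j (A (e j))) =
      (∑ j, ⟪A (e j), e j⟫) * φ e +
      ∑ j, φ (Function.update e j
        ((Submodule.orthogonalProjectionOnto (Submodule.span ℝ (Set.range e))ᗮ (A (e j)) : _) : V)) := by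
  set K := Submodule.span ℝ (Set.range e) with hK
  have key : ∀ j : Fin p,
      φ (Function.update e j (A (e j))) =
        ⟪A (e j), e j⟫ * φ e + φ (Function.update e j
          ((Submodule.orthogonalProjectionOnto Kᗮ (A (e j)) : _) : V)) := by
    intro j
    have hdecomp : A (e j) =
        ((Submodule.orthogonalProjectionOnto K (A (e j)) : _) : V) +
        ((Submodule.orthogonalProjectionOnto Kᗮ (A (e j)) : _) : V) :=
      (Submodule.starProjection_add_starProjection_orthogonal (K := K) (A (e j))).symm
    have h1 : φ (Function.update e j (A (e j))) =
        φ (Function.update e j ((Submodule.orthogonalProjectionOnto K (A (e j)) : _) : V)) +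
        φ (Function.update e j ((Submodule.orthogonalProjectionOnto Kᗮ (A (e j)) : _) : V)) := by
      conv_lhs => rw [hdecomp]
      exact φ.map_update_add _ j _ _
    rw [h1, phi_update_span φ e he j _ (Submodule.orthogonalProjectionOnto K (A (e j))).2]
    congr 2
    have hinner : ⟪((Submodule.orthogonalProjectionOnto Kᗮ (A (e j)) : _) : V), e j⟫ = 0 := by
      rw [real_inner_comm]
      exact (Submodule.orthogonalProjectionOnto Kᗮ (A (e j))).2 _ (Submodule.subset_span ⟨j, rfl⟩)
    calc ⟪((Submodule.orthogonalProjectionOnto K (A (e j)) : _) : V), e j⟫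
        = ⟪((Submodule.orthogonalProjectionOnto K (A (e j)) : _) : V), e j⟫ + ⟪((Submodule.orthogonalProjectionOnto Kᗮ (A (e j)) : _) : V), e j⟫ := by rw [hinner, add_zero]
      _ = ⟪A (e j), e j⟫ := by rw [← inner_add_left, ← hdecomp]
  rw [Finset.sum_congr rfl (fun j _ => key j), Finset.sum_add_distrib, Finset.sum_mul]
end

section
/- Let V be a finite-dimensional real inner product space, p ≥ 1, let φ be an alternating p-form on V of comass at most one, and let e = (e_1,…,e_p) be a φ-plane. Then for every vector v ∈ V, Σ_{j=1}^p ⟨v, e_j⟩ · φ(e_1,…,e_{j−1}, v, e_{j+1},…,e_p) = Σ_{j=1}^p ⟨v, e_j⟩², i.e. this sum equals the squared norm of the orthogonal projection of v onto span{e_1,…,e_p}; in particular it is nonnegative. (Equivalently, the p-form v♭ ∧ (v ⌟ φ) evaluated on a φ-plane equals |v ⌟ ξ|² ≥ 0.) -/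
open scoped RealInnerProductSpace

open Function in
/-- First-variation lemma: if `φ` has comass at most one and attains `1` on the orthonormal
frame `e`, then replacing any `e j` by a vector orthogonal to all the `e k` gives `φ = 0`. -/
lemma phi_update_perp_eq_zero
    {V : Type*} [NormedAddCommGroup V] [InnerProductSpace ℝ V] {p : ℕ}
    (φ : V [⋀^Fin p]→ₗ[ℝ] ℝ)
    (hcomass : ∀ u : Fin p → V, Orthonormal ℝ u → φ u ≤ 1)
    (e : Fin p → V) (he : Orthonormal ℝ e) (heφ : φ e = 1)
    (j : Fin p) (u : V) (hu : ∀ k, ⟪u, e k⟫ = 0) :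
    φ (update e j u) = 0 := by
  rcases eq_or_ne u 0 with rfl | hu0
  · exact φ.map_update_zero e j
  have hn : (0:ℝ) < ‖u‖ := norm_pos_iff.mpr hu0
  set u' : V := ‖u‖⁻¹ • u with hu'
  have hu'n : ‖u'‖ = 1 := by
    rw [hu', norm_smul, norm_inv, norm_norm, inv_mul_cancel₀ hn.ne']
  have hu'perp : ∀ k, ⟪u', e k⟫ = 0 := by
    intro k; rw [hu', real_inner_smul_left, hu k, mul_zero]
  set c : ℝ := φ (update e j u') with hc
  have hc0 : c = 0 := by
    set s : ℝ := Real.sqrt (1 + c ^ 2) with hs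
    have hs1 : (1:ℝ) ≤ s := by
      rw [hs]
      nlinarith [Real.sq_sqrt (by positivity : (0:ℝ) ≤ 1 + c ^ 2),
        Real.sqrt_nonneg (1 + c ^ 2)]
    have hspos : (0:ℝ) < s := lt_of_lt_of_le one_pos hs1
    set f : Fin p → V := update e j (s⁻¹ • e j + (c / s) • u') with hf
    have hforth : Orthonormal ℝ f := by
      rw [orthonormal_iff_ite]
      have heo := orthonormal_iff_ite.mp he
      have hinner : ∀ k, ⟪(s⁻¹ • e j + (c / s) • u'), e k⟫
          = s⁻¹ * ⟪e j, e k⟫ := by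
        intro k
        rw [inner_add_left, real_inner_smul_left, real_inner_smul_left,
          hu'perp k, mul_zero, add_zero]
      intro i i'
      by_cases hi : i = j <;> by_cases hi' : i' = j
      · rw [hi, hi', if_pos rfl]
        simp only [hf, update_self]
        rw [inner_add_right, real_inner_smul_right, real_inner_smul_right,
          hinner j, heo j j, if_pos rfl]
        have hje : ⟪e j, u'⟫ = 0 := by
          rw [real_inner_comm]; exact hu'perp j
        rw [inner_add_left, real_inner_smul_left, real_inner_smul_left, hje,
          mul_zero, zero_add, real_inner_self_eq_norm_sq, hu'n]
        have hs2 : s ^ 2 = 1 + c ^ 2 := Real.sq_sqrt (by positivity)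
        field_simp
        nlinarith
      · have hii' : i ≠ i' := fun h => hi' (h ▸ hi)
        rw [if_neg hii']
        simp only [hf, hi, update_self, update_of_ne hi']
        rw [hinner i', heo j i', if_neg (fun h => hi' h.symm), mul_zero]
      · have hii' : i ≠ i' := fun h => hi (h.symm ▸ hi')
        rw [if_neg hii']
        simp only [hf, hi', update_self, update_of_ne hi]
        rw [real_inner_comm, hinner i, heo j i, if_neg (fun h => hi h.symm),
          mul_zero]
      · simp only [hf, update_of_ne hi, update_of_ne hi']
        exact heo i i'
    have hfval : φ f = s := by
      rw [hf, φ.map_update_add, φ.map_update_smul, φ.map_update_smul,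
        update_eq_self j e, heφ, ← hc]
      have hs2 : s ^ 2 = 1 + c ^ 2 := Real.sq_sqrt (by positivity)
      simp only [smul_eq_mul]
      field_simp
      nlinarith
    have := hcomass f hforth
    rw [hfval] at this
    have hs2 : s ^ 2 = 1 + c ^ 2 := Real.sq_sqrt (by positivity)
    nlinarith
  have : u = ‖u‖ • u' := by
    rw [hu', smul_smul, mul_inv_cancel₀ hn.ne', one_smul]
  rw [this, φ.map_update_smul, ← hc, hc0, smul_zero]

/-- **Corollary 2.7** (Harvey–Lawson), pointwise form.  For a comass-one form `φ`, a `φ`-plane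
`e` and any vector `v`: `Σ_j ⟨v,e_j⟩·φ(e_1,…,v,…,e_p) = Σ_j ⟨v,e_j⟩²`, the squared norm of the
orthogonal projection of `v` onto the plane; in particular the sum is nonnegative. -/
theorem df_wedge_dphi_f_on_phi_plane
    {V : Type*} [NormedAddCommGroup V] [InnerProductSpace ℝ V]
    [FiniteDimensional ℝ V] {p : ℕ} (hp : 1 ≤ p)
    (φ : V [⋀^Fin p]→ₗ[ℝ] ℝ)
    (hcomass : ∀ u : Fin p → V, Orthonormal ℝ u → φ u ≤ 1)
    (e : Fin p → V) (he : Orthonormal ℝ e) (heφ : φ e = 1) (v : V) :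
    (∑ j, ⟪v, e j⟫ * φ (Function.update e j v)) = ∑ j, ⟪v, e j⟫ ^ 2 ∧
    0 ≤ ∑ j, ⟪v, e j⟫ * φ (Function.update e j v) := by
  have heo := orthonormal_iff_ite.mp he
  set w : V := v - ∑ k, ⟪v, e k⟫ • e k with hw
  have hwperp : ∀ k, ⟪w, e k⟫ = 0 := by
    intro k
    rw [hw, inner_sub_left, sum_inner]
    have : ∀ l ∈ Finset.univ, ⟪(⟪v, e l⟫ : ℝ) • e l, e k⟫
        = if l = k then ⟪v, e k⟫ else 0 := by
      intro l _
      rw [real_inner_smul_left, heo l k]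
      split <;> simp_all
    rw [Finset.sum_congr rfl this, Finset.sum_ite_eq' Finset.univ k]
    simp
  have key : ∀ j, φ (Function.update e j v) = ⟪v, e j⟫ := by
    intro j
    have hv : v = w + ∑ k, ⟪v, e k⟫ • e k := by rw [hw]; abel
    have hsplit : φ (Function.update e j v)
        = φ (Function.update e j w)
          + ∑ k, φ (Function.update e j ((⟪v, e k⟫ : ℝ) • e k)) := by
      conv_lhs => rw [hv]
      rw [φ.map_update_add, φ.map_update_sum]
    rw [hsplit, phi_update_perp_eq_zero φ hcomass e he heφ j w hwperp, zero_add]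
    have : ∀ k ∈ Finset.univ, φ (Function.update e j ((⟪v, e k⟫ : ℝ) • e k))
        = if k = j then ⟪v, e j⟫ else 0 := by
      intro k _
      rw [φ.map_update_smul]
      rcases eq_or_ne k j with rfl | hkj
      · rw [Function.update_eq_self k e, heφ, smul_eq_mul, mul_one, if_pos rfl]
      · have hz : φ (Function.update e j (e k)) = 0 := by
          apply φ.map_eq_zero_of_eq _ (i := j) (j := k)
          · rw [Function.update_self, Function.update_of_ne hkj]
          · exact fun h => hkj (h.symm)
        rw [hz, smul_zero, if_neg hkj]
    rw [Finset.sum_congr rfl this, Finset.sum_ite_eq' Finset.univ j]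
    simp
  constructor
  · exact Finset.sum_congr rfl fun j _ => by rw [key j, sq]
  · have : (∑ j, ⟪v, e j⟫ * φ (Function.update e j v)) = ∑ j, ⟪v, e j⟫ ^ 2 :=
      Finset.sum_congr rfl fun j _ => by rw [key j, sq]
    rw [this]
    exact Finset.sum_nonneg fun j _ => sq_nonneg _
end

section
/- Let V be a finite-dimensional real inner product space, p ≥ 1, let φ be an alternating p-form on V of comass at most one, let e = (e_1,…,e_p) be a φ-plane, and let v, w ∈ V. Let A = v∘w be the symmetric endomorphism A(x) = ½(⟨w,x⟩ v + ⟨v,x⟩ w), and let P denote the orthogonal projection of V onto span{e_1,…,e_p}. Then (λ_φ A)(e_1,…,e_p) = ⟨P v, P w⟩. -/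
open scoped RealInnerProductSpace

/-- **Lemma 2.B.2** (Harvey–Lawson).  For a comass-one form `φ`, a `φ`-plane `e`, vectors
`v, w`, and the symmetric endomorphism `A = v∘w`, `A(x) = ½(⟨w,x⟩v + ⟨v,x⟩w)`, one has
`λ_φ(A)(e) = ⟨P v, P w⟩` where `P` is the orthogonal projection onto `span{e_1,…,e_p}`. -/
theorem lambda_phi_sym_product
    {V : Type*} [NormedAddCommGroup V] [InnerProductSpace ℝ V]
    [FiniteDimensional ℝ V] {p : ℕ} (hp : 1 ≤ p)
    (φ : V [⋀^Fin p]→ₗ[ℝ] ℝ)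
    (hcomass : ∀ u : Fin p → V, Orthonormal ℝ u → φ u ≤ 1)
    (e : Fin p → V) (he : Orthonormal ℝ e) (heφ : φ e = 1)
    (v w : V) (A : V →ₗ[ℝ] V)
    (hA : ∀ x, A x = (1 / 2 : ℝ) • (⟪w, x⟫ • v + ⟪v, x⟫ • w)) :
    ∑ j, φ (Function.update e j (A (e j))) =
      ⟪((Submodule.orthogonalProjectionOnto (Submodule.span ℝ (Set.range e)) v : _) : V),
        ((Submodule.orthogonalProjectionOnto (Submodule.span ℝ (Set.range e)) w : _) : V)⟫ := by
  classical
  have hee : ∀ i k, ⟪e i, e k⟫ = if i = k then 1 else 0 := orthonormal_iff_ite.mp he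
  -- Step 1: φ vanishes if one entry is orthogonal to all `e i`.
  have hperp : ∀ (j : Fin p) (x : V), (∀ i, ⟪e i, x⟫ = 0) →
      φ (Function.update e j x) = 0 := by
    intro j x hx
    rcases eq_or_ne x 0 with rfl | hx0
    · exact φ.map_update_zero e j
    · have hnx : ‖x‖ ≠ 0 := norm_ne_zero_iff.mpr hx0
      set u := ‖x‖⁻¹ • x with hu
      have hxu : x = ‖x‖ • u := by
        rw [hu, smul_smul, mul_inv_cancel₀ hnx, one_smul]
      have hux : ∀ i, ⟪e i, u⟫ = 0 := by
        intro i; rw [hu, inner_smul_right, hx i, mul_zero]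
      have hnu : ‖u‖ = 1 := by
        rw [hu, norm_smul, norm_inv, norm_norm, inv_mul_cancel₀ hnx]
      have huu : ⟪u, u⟫ = (1 : ℝ) := by
        rw [real_inner_self_eq_norm_sq, hnu]; norm_num
      suffices hc : φ (Function.update e j u) = 0 by
        rw [hxu, φ.map_update_smul, hc, smul_zero]
      set c := φ (Function.update e j u) with hc
      by_contra hc0
      have hcsq : (0 : ℝ) < c ^ 2 := by positivity
      set s := Real.sqrt (1 + c ^ 2) with hs
      have hs2 : s ^ 2 = 1 + c ^ 2 := Real.sq_sqrt (by positivity)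
      have hspos : (0 : ℝ) < s := Real.sqrt_pos.mpr (by positivity)
      have hs1 : 1 < s := by nlinarith
      set g := (1 / s) • e j + (c / s) • u with hg
      have hgg : ⟪g, g⟫ = (1 : ℝ) := by
        rw [hg]
        simp only [inner_add_add_self, inner_smul_left, inner_smul_right,
          real_inner_comm (e j) u]
        rw [hee j j, hux j, huu]
        simp only [if_pos rfl, conj_trivial, if_true]
        field_simp
        nlinarith
      have hgi : ∀ i, i ≠ j → ⟪e i, g⟫ = 0 := by
        intro i hij
        rw [hg, inner_add_right, inner_smul_right, inner_smul_right,
          hee i j, hux i, if_neg hij]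
        ring
      have hof : Orthonormal ℝ (Function.update e j g) := by
        rw [orthonormal_iff_ite]
        intro i k
        by_cases hi : i = j <;> by_cases hk : k = j
        · subst hi; subst hk
          rw [Function.update_self, hgg, if_pos rfl]
        · subst hi
          rw [Function.update_self, Function.update_of_ne hk,
            real_inner_comm, hgi k hk, if_neg (fun h => hk h.symm)]
        · subst hk
          rw [Function.update_of_ne hi, Function.update_self, hgi i hi,
            if_neg hi]
        · rw [Function.update_of_ne hi, Function.update_of_ne hk, hee i k]
      have hle := hcomass _ hof
      have hval : φ (Function.update e j g) = s := by
        rw [hg, φ.map_update_add, φ.map_update_smul, φ.map_update_smul,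
          Function.update_eq_self, heφ, ← hc]
        have : (1 / s) * 1 + (c / s) * c = s := by
          field_simp; nlinarith
        simpa using this
      rw [hval] at hle
      linarith
  -- Step 2: φ (update e j x) = ⟪e j, x⟫
  have hupdate : ∀ (j : Fin p) (x : V), φ (Function.update e j x) = ⟪e j, x⟫ := by
    intro j x
    set y := ∑ i, (⟪e i, x⟫ : ℝ) • e i with hy
    have hr : ∀ i, ⟪e i, x - y⟫ = 0 := by
      intro i
      rw [inner_sub_right, hy, inner_sum]
      simp [inner_smul_right, hee, mul_ite, Finset.sum_ite_eq]
    have hx : x = y + (x - y) := by abel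
    rw [hx, φ.map_update_add, hperp j _ hr, add_zero, hy, φ.map_update_sum]
    have hterm : ∀ i : Fin p,
        φ (Function.update e j ((⟪e i, x⟫ : ℝ) • e i)) =
          if i = j then ⟪e j, x⟫ else 0 := by
      intro i
      rw [φ.map_update_smul]
      by_cases hij : i = j
      · subst hij
        rw [Function.update_eq_self, heφ, if_pos rfl, smul_eq_mul, mul_one]
      · rw [if_neg hij, φ.map_eq_zero_of_eq _ (i := i) (j := j) ?_ hij, smul_zero]
        rw [Function.update_of_ne hij, Function.update_self]
    rw [Finset.sum_congr rfl fun i _ => hterm i]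
    simp
  -- Step 3: compute LHS
  have hAe : ∀ j : Fin p, ⟪e j, A (e j)⟫ = ⟪e j, v⟫ * ⟪e j, w⟫ := by
    intro j
    rw [hA, inner_smul_right, inner_add_right, inner_smul_right, inner_smul_right,
      real_inner_comm w (e j), real_inner_comm v (e j)]
    ring
  have hLHS : ∑ j, φ (Function.update e j (A (e j))) = ∑ j, ⟪e j, v⟫ * ⟪e j, w⟫ := by
    refine Finset.sum_congr rfl fun j _ => ?_
    rw [hupdate, hAe]
  -- Step 4: compute projections
  have hproj : ∀ z : V,
      ((Submodule.orthogonalProjectionOnto (Submodule.span ℝ (Set.range e)) z : _) : V) =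
        ∑ i, (⟪e i, z⟫ : ℝ) • e i := by
    intro z
    rw [← Submodule.starProjection_apply]
    apply Submodule.eq_starProjection_of_mem_of_inner_eq_zero
    · exact Submodule.sum_mem _ fun i _ =>
        Submodule.smul_mem _ _ (Submodule.subset_span ⟨i, rfl⟩)
    · intro t ht
      have hbase : ∀ k, ⟪z - ∑ i, (⟪e i, z⟫ : ℝ) • e i, e k⟫ = 0 := by
        intro k
        rw [inner_sub_left, sum_inner]
        simp [inner_smul_left, hee, ite_mul, Finset.sum_ite_eq', real_inner_comm]
      induction ht using Submodule.span_induction with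
      | mem t ht => obtain ⟨k, rfl⟩ := ht; exact hbase k
      | zero => exact inner_zero_right _
      | add a b _ _ ha hb => rw [inner_add_right, ha, hb, add_zero]
      | smul r a _ ha => rw [inner_smul_right, ha, mul_zero]
  rw [hLHS, hproj v, hproj w, sum_inner]
  refine Finset.sum_congr rfl fun j _ => ?_
  rw [real_inner_smul_left, inner_sum]
  simp [inner_smul_right, hee, mul_ite, Finset.sum_ite_eq]
end

section
/- Let V be a finite-dimensional real inner product space, p ≥ 1, and let φ be an alternating p-form on V of comass at most one. Let v, w ∈ V be linearly independent, and suppose that for every unit vector u ∈ span{v,w} there exists an orthonormal (p−1)-tuple (f_1,…,f_{p−1}) of vectors orthogonal to span{v,w} such that (u, f_1,…,f_{p−1}) is a φ-plane. For real numbers a, b, c let B be the symmetric endomorphism B(x) = a⟨v,x⟩v + b(⟨w,x⟩v + ⟨v,x⟩w) + c⟨w,x⟩w. Then (λ_φ B)(e_1,…,e_p) ≥ 0 for every φ-plane (e_1,…,e_p) if and only if the 2×2 matrix [[a, b], [b, c]] is positive semidefinite. -/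
open scoped RealInnerProductSpace

/-- Positivity of the real inner product square. -/
lemma real_inner_self_pos_of_ne_zero {V : Type*} [NormedAddCommGroup V]
    [InnerProductSpace ℝ V] {x : V} (hx : x ≠ 0) : (0 : ℝ) < ⟪x, x⟫ := by
  rw [real_inner_self_eq_norm_mul_norm]
  have h : 0 < ‖x‖ := norm_pos_iff.mpr hx
  exact mul_pos h h

/-- Updating an orthonormal family at one spot with a unit vector orthogonal to the others
stays orthonormal. -/
lemma orthonormal_update_aux {V : Type*} [NormedAddCommGroup V] [InnerProductSpace ℝ V]
    {n : ℕ} {e : Fin n → V} (he : Orthonormal ℝ e) (j : Fin n) (y : V)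
    (hy : ⟪y, y⟫ = 1) (hy' : ∀ i, i ≠ j → ⟪e i, y⟫ = 0) :
    Orthonormal ℝ (Function.update e j y) := by
  rw [orthonormal_iff_ite] at he ⊢
  intro i k
  simp only [Function.update_apply]
  by_cases hi : i = j <;> by_cases hk : k = j
  · rw [if_pos hi, if_pos hk, hi.trans hk.symm, if_pos rfl]
    exact hy
  · rw [if_pos hi, if_neg hk, if_neg (by rintro rfl; exact hk hi)]
    rw [real_inner_comm]
    exact hy' k hk
  · rw [if_neg hi, if_pos hk, if_neg (by rintro rfl; exact hi hk)]
    exact hy' i hi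
  · rw [if_neg hi, if_neg hk]
    exact he i k

/-- First variation at a φ-plane in a direction orthogonal to the plane vanishes. -/
lemma first_variation_zero {V : Type*} [NormedAddCommGroup V] [InnerProductSpace ℝ V]
    {q : ℕ} (φ : V [⋀^Fin (q + 1)]→ₗ[ℝ] ℝ)
    (hcomass : ∀ u : Fin (q + 1) → V, Orthonormal ℝ u → φ u ≤ 1)
    {e : Fin (q + 1) → V} (he : Orthonormal ℝ e) (hφe : φ e = 1)
    (j : Fin (q + 1)) {x : V} (hx : ∀ i, ⟪e i, x⟫ = 0) :
    φ (Function.update e j x) = 0 := by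
  -- reduce to the case of a unit vector
  rcases eq_or_ne x 0 with rfl | hx0
  · have h0 := φ.map_update_smul e j (0 : ℝ) 0
    rw [zero_smul, zero_smul] at h0
    exact h0
  have hnx : ‖x‖ ≠ 0 := norm_ne_zero_iff.mpr hx0
  set x' : V := ‖x‖⁻¹ • x with hx'def
  have hxx' : x = ‖x‖ • x' := by
    rw [hx'def, smul_smul, mul_inv_cancel₀ hnx, one_smul]
  have hx'unit : ⟪x', x'⟫ = 1 := by
    rw [hx'def, real_inner_smul_left, real_inner_smul_right,
      real_inner_self_eq_norm_mul_norm]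
    field_simp
  have hx'orth : ∀ i, ⟪e i, x'⟫ = 0 := by
    intro i; rw [hx'def, real_inner_smul_right, hx i, mul_zero]
  suffices hz : φ (Function.update e j x') = 0 by
    rw [hxx', φ.map_update_smul e j, hz, smul_zero]
  -- the unit-vector case, via a rotation
  set s : ℝ := φ (Function.update e j x') with hs
  set t : ℝ := Real.arctan s with ht
  set y : V := Real.cos t • e j + Real.sin t • x' with hy
  have hejej : ⟪e j, e j⟫ = (1 : ℝ) := by
    rw [orthonormal_iff_ite] at he; simpa using he j j
  have hyy : ⟪y, y⟫ = 1 := by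
    have h2 := hx'orth j
    have h3 : ⟪x', e j⟫ = 0 := by rw [real_inner_comm]; exact h2
    rw [hy, inner_add_add_self]
    simp only [real_inner_smul_left, real_inner_smul_right]
    rw [hejej, hx'unit, h2, h3]
    nlinarith [Real.sin_sq_add_cos_sq t]
  have hyorth : ∀ i, i ≠ j → ⟪e i, y⟫ = 0 := by
    intro i hij
    rw [hy, inner_add_right, real_inner_smul_right, real_inner_smul_right, hx'orth i]
    rw [orthonormal_iff_ite] at he
    have := he i j
    rw [if_neg hij] at this
    rw [this]; ring
  have hON : Orthonormal ℝ (Function.update e j y) := orthonormal_update_aux he j y hyy hyorth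
  have hval : φ (Function.update e j y) = Real.cos t + Real.sin t * s := by
    rw [hy, φ.map_update_add, φ.map_update_smul, φ.map_update_smul,
      Function.update_eq_self, hφe]
    simp [smul_eq_mul]
    exact Or.inl rfl
  have hle := hcomass _ hON
  rw [hval, ht, Real.cos_arctan, Real.sin_arctan] at hle
  have hsq : Real.sqrt (1 + s ^ 2) ^ 2 = 1 + s ^ 2 := Real.sq_sqrt (by positivity)
  have hpos : 0 < Real.sqrt (1 + s ^ 2) := Real.sqrt_pos.mpr (by positivity)
  have h1 : (1 + s ^ 2) / Real.sqrt (1 + s ^ 2) ≤ 1 := by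
    calc (1 + s ^ 2) / Real.sqrt (1 + s ^ 2)
        = 1 / Real.sqrt (1 + s ^ 2) + s / Real.sqrt (1 + s ^ 2) * s := by ring
      _ ≤ 1 := hle
  rw [div_le_one hpos] at h1
  nlinarith [sq_nonneg s, hsq, hpos]

/-- At a φ-plane, the derivation `λ_φ A` evaluates to the trace of `A` over the plane. -/
lemma lambda_trace {V : Type*} [NormedAddCommGroup V] [InnerProductSpace ℝ V]
    {q : ℕ} (φ : V [⋀^Fin (q + 1)]→ₗ[ℝ] ℝ)
    (hcomass : ∀ u : Fin (q + 1) → V, Orthonormal ℝ u → φ u ≤ 1)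
    {e : Fin (q + 1) → V} (he : Orthonormal ℝ e) (hφe : φ e = 1)
    (A : V →ₗ[ℝ] V) :
    ∑ j, φ (Function.update e j (A (e j))) = ∑ j, ⟪e j, A (e j)⟫ := by
  refine Finset.sum_congr rfl fun j _ => ?_
  -- linear functional z ↦ φ (update e j z)
  set L : V →ₗ[ℝ] ℝ :=
    { toFun := fun z => φ (Function.update e j z)
      map_add' := fun z₁ z₂ => φ.map_update_add e j z₁ z₂
      map_smul' := fun r z => φ.map_update_smul e j r z } with hL
  have hLapp : ∀ z, L z = φ (Function.update e j z) := fun z => rfl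
  have key : ∀ z : V, L z = ⟪e j, z⟫ := by
    intro z
    set r : V := z - ∑ i, ⟪e i, z⟫ • e i with hr
    have hrorth : ∀ i, ⟪e i, r⟫ = 0 := by
      intro i
      rw [hr, inner_sub_right, inner_sum]
      have : ∀ k, ⟪e i, (⟪e k, z⟫ : ℝ) • e k⟫ = if i = k then ⟪e k, z⟫ else 0 := by
        intro k
        rw [real_inner_smul_right]
        rw [orthonormal_iff_ite] at he
        rw [he i k]
        by_cases h : i = k <;> simp [h]
      rw [Finset.sum_congr rfl fun k _ => this k, Finset.sum_ite_eq]
      simp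
    have hz : z = (∑ i, ⟪e i, z⟫ • e i) + r := by rw [hr]; abel
    have hLr : L r = 0 := first_variation_zero φ hcomass he hφe j hrorth
    have hLei : ∀ i, L (e i) = if i = j then 1 else 0 := by
      intro i
      by_cases h : i = j
      · subst h; rw [hLapp, Function.update_eq_self, hφe, if_pos rfl]
      · rw [hLapp, if_neg h]
        exact φ.map_eq_zero_of_eq _ (by
          rw [Function.update_self, Function.update_of_ne h]) h
    conv_lhs => rw [hz, map_add, hLr, add_zero, map_sum]
    have : ∀ i, L ((⟪e i, z⟫ : ℝ) • e i) = if i = j then ⟪e i, z⟫ else 0 := by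
      intro i
      rw [map_smul, hLei i, smul_eq_mul]
      by_cases h : i = j <;> simp [h]
    rw [Finset.sum_congr rfl fun i _ => this i, Finset.sum_ite_eq']
    simp
  exact key (A (e j))

/-- **Lemma 2.B.5** (Harvey–Lawson).  Let `v, w` be linearly independent, and suppose every
unit vector `u ∈ span{v,w}` extends by an orthonormal `(p-1)`-tuple orthogonal to `span{v,w}`
to a `φ`-plane.  Then `λ_φ(a v∘v + 2b v∘w + c w∘w)` is nonnegative on all `φ`-planes iff the
matrix `[[a,b],[b,c]]` is positive semidefinite. -/
theorem lambda_phi_two_vector_positivity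
    {V : Type*} [NormedAddCommGroup V] [InnerProductSpace ℝ V]
    [FiniteDimensional ℝ V] {q : ℕ}
    (φ : V [⋀^Fin (q + 1)]→ₗ[ℝ] ℝ)
    (hcomass : ∀ u : Fin (q + 1) → V, Orthonormal ℝ u → φ u ≤ 1)
    (v w : V) (hvw : LinearIndependent ℝ ![v, w])
    (hrich : ∀ u : V, u ∈ Submodule.span ℝ ({v, w} : Set V) → ‖u‖ = 1 →
      ∃ f : Fin q → V, (∀ i, ⟪f i, v⟫ = 0 ∧ ⟪f i, w⟫ = 0) ∧
        Orthonormal ℝ (Fin.cons u f : Fin (q + 1) → V) ∧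
        φ (Fin.cons u f) = 1)
    (a b c : ℝ) (B : V →ₗ[ℝ] V)
    (hB : ∀ x, B x = a • (⟪v, x⟫ • v) + b • (⟪w, x⟫ • v + ⟪v, x⟫ • w) + c • (⟪w, x⟫ • w)) :
    (∀ e : Fin (q + 1) → V, Orthonormal ℝ e → φ e = 1 →
        0 ≤ ∑ j, φ (Function.update e j (B (e j)))) ↔
      Matrix.PosSemidef !![a, b; b, c] := by
  -- the quadratic form of B
  have qB : ∀ x : V, ⟪x, B x⟫ = a * ⟪v, x⟫ ^ 2 + 2 * b * ⟪v, x⟫ * ⟪w, x⟫ + c * ⟪w, x⟫ ^ 2 := by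
    intro x
    rw [hB x]
    simp only [inner_add_right, real_inner_smul_right]
    rw [real_inner_comm x v, real_inner_comm x w]
    ring
  constructor
  · -- nonnegativity on φ-planes implies PSD
    intro h
    -- the key quadratic inequality
    have hquad : ∀ x y : ℝ, 0 ≤ a * x ^ 2 + 2 * b * x * y + c * y ^ 2 := by
      intro x y
      by_cases hxy : x = 0 ∧ y = 0
      · rw [hxy.1, hxy.2]; norm_num
      · -- basic facts from linear independence
        rw [linearIndependent_fin2] at hvw
        simp only [Matrix.cons_val_one, Matrix.head_cons, Matrix.cons_val_zero] at hvw
        obtain ⟨hw0, hnv⟩ := hvw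
        have hv0 : v ≠ 0 := by
          rintro rfl; exact hnv 0 (by simp)
        have hvvpos : (0 : ℝ) < ⟪v, v⟫ := real_inner_self_pos_of_ne_zero hv0
        have hwwpos : (0 : ℝ) < ⟪w, w⟫ := real_inner_self_pos_of_ne_zero hw0
        -- the Gram determinant is positive
        set d : ℝ := ⟪v, v⟫ * ⟪w, w⟫ - ⟪v, w⟫ ^ 2 with hd
        have hdpos : 0 < d := by
          set z : V := ⟪v, v⟫ • w - ⟪v, w⟫ • v with hz
          have hz0 : z ≠ 0 := by
            intro h0
            rw [hz, sub_eq_zero] at h0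
            by_cases hvw0 : ⟪v, w⟫ = 0
            · rw [hvw0, zero_smul] at h0
              exact hw0 (by
                rcases smul_eq_zero.mp h0 with h | h
                · exact absurd h hvvpos.ne'
                · exact h)
            · apply hnv (⟪v, v⟫ / ⟪v, w⟫)
              rw [div_eq_mul_inv, mul_comm ⟪v, v⟫ ⟪v, w⟫⁻¹, mul_smul, h0, smul_smul,
                inv_mul_cancel₀ hvw0, one_smul]
          have hzz : (0 : ℝ) < ⟪z, z⟫ := real_inner_self_pos_of_ne_zero hz0
          have : ⟪z, z⟫ = ⟪v, v⟫ * d := by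
            rw [hz, hd]
            simp only [inner_sub_left, inner_sub_right, real_inner_smul_left,
              real_inner_smul_right]
            rw [real_inner_comm w v]
            ring
          nlinarith [this, hzz, hvvpos]
        -- construct a unit vector with prescribed inner products (up to scale)
        have hdne : d ≠ 0 := ne_of_gt hdpos
        have hwv : ⟪w, v⟫ = ⟪v, w⟫ := real_inner_comm v w
        set u₀ : V := ((⟪w, w⟫ * x - ⟪v, w⟫ * y) / d) • v +
          ((⟪v, v⟫ * y - ⟪v, w⟫ * x) / d) • w with hu₀
        have hvx : ⟪v, u₀⟫ = x := by
          rw [hu₀, inner_add_right, real_inner_smul_right, real_inner_smul_right, hd]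
          rw [hd] at hdne
          rw [div_mul_eq_mul_div, div_mul_eq_mul_div, ← add_div, div_eq_iff hdne]
          ring
        have hwy : ⟪w, u₀⟫ = y := by
          rw [hu₀, inner_add_right, real_inner_smul_right, real_inner_smul_right, hwv, hd]
          rw [hd] at hdne
          rw [div_mul_eq_mul_div, div_mul_eq_mul_div, ← add_div, div_eq_iff hdne]
          ring
        have hu₀0 : u₀ ≠ 0 := by
          intro h0
          rw [h0, inner_zero_right] at hvx hwy
          exact hxy ⟨hvx.symm, hwy.symm⟩
        have hnu₀ : ‖u₀‖ ≠ 0 := norm_ne_zero_iff.mpr hu₀0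
        set u : V := ‖u₀‖⁻¹ • u₀ with hu
        have humem : u ∈ Submodule.span ℝ ({v, w} : Set V) := by
          apply Submodule.smul_mem
          exact Submodule.add_mem _
            (Submodule.smul_mem _ _ (Submodule.subset_span (Set.mem_insert v {w})))
            (Submodule.smul_mem _ _ (Submodule.subset_span
              (Set.mem_insert_of_mem v rfl)))
        have hunorm : ‖u‖ = 1 := by
          rw [hu, norm_smul, norm_inv, norm_norm, inv_mul_cancel₀ hnu₀]
        obtain ⟨f, hforth, hON, hφ1⟩ := hrich u humem hunorm
        have hsum := h _ hON hφ1
        rw [lambda_trace φ hcomass hON hφ1 B] at hsum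
        have htail : ∀ i : Fin q, ⟪(Fin.cons u f : Fin (q + 1) → V) i.succ,
            B ((Fin.cons u f : Fin (q + 1) → V) i.succ)⟫ = 0 := by
          intro i
          rw [Fin.cons_succ, qB, real_inner_comm (f i) v, real_inner_comm (f i) w,
            (hforth i).1, (hforth i).2]
          ring
        rw [Fin.sum_univ_succ] at hsum
        rw [Finset.sum_congr rfl fun i _ => htail i] at hsum
        simp only [Fin.cons_zero, Finset.sum_const, smul_zero, add_zero] at hsum
        rw [qB] at hsum
        have hvu : ⟪v, u⟫ = ‖u₀‖⁻¹ * x := by rw [hu, real_inner_smul_right, hvx]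
        have hwu : ⟪w, u⟫ = ‖u₀‖⁻¹ * y := by rw [hu, real_inner_smul_right, hwy]
        rw [hvu, hwu] at hsum
        have hinvpos : 0 < ‖u₀‖⁻¹ := by positivity
        nlinarith [hsum, mul_pos hinvpos hinvpos]
    rw [Matrix.posSemidef_iff_dotProduct_mulVec]
    constructor
    · -- hermitian
      ext i j
      fin_cases i <;> fin_cases j <;> simp [Matrix.conjTranspose_apply]
    · intro z
      have := hquad (z 0) (z 1)
      simp [dotProduct, Matrix.mulVec, Fin.sum_univ_two]
      nlinarith [this]
  · -- PSD implies nonnegativity on φ-planes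
    intro hpsd e he hφe
    rw [lambda_trace φ hcomass he hφe B]
    apply Finset.sum_nonneg
    intro j _
    rw [qB]
    have := hpsd.dotProduct_mulVec_nonneg ![⟪v, e j⟫, ⟪w, e j⟫]
    simp [dotProduct, Matrix.mulVec, Fin.sum_univ_two] at this
    nlinarith [this]
end

section
/- Let V be a finite-dimensional real inner product space, p ≥ 1, let φ be an alternating p-form on V, and let ζ ∈ V. Define the alternating p-form ω = ζ♭ ∧ (ζ ⌟ φ) by ω(v_1,…,v_p) = Σ_{i=1}^p (−1)^{i−1} ⟨ζ, v_i⟩ · φ(ζ, v_1,…,v_{i−1}, v_{i+1},…,v_p). Then ω is identically zero if and only if ζ ⌟ φ is identically zero, i.e. if and only if φ(ζ, w_1,…,w_{p−1}) = 0 for all w_1,…,w_{p−1} ∈ V. (Consequently the symbol σ_ζ(dd^φ) = ζ ∧ (ζ ⌟ φ) of the operator dd^φ is injective for all ζ ≠ 0 exactly when the calibration involves all the variables, i.e. ζ ⌟ φ ≠ 0 for all ζ ≠ 0; so dd^φ is overdetermined elliptic if and only if φ involves all the variables.) -/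
open scoped RealInnerProductSpace

/-- **Proposition 1.6** (Harvey–Lawson), symbol computation.  For `ζ ∈ V`, the `p`-form
`ζ♭ ∧ (ζ ⌟ φ)` vanishes identically iff `ζ ⌟ φ` vanishes identically.  (Hence the symbol
`σ_ζ(dd^φ) = ζ ∧ (ζ ⌟ φ)` is injective for all `ζ ≠ 0` exactly when `φ` involves all the
variables, i.e. `dd^φ` is overdetermined elliptic iff `φ` involves all the variables.) -/
theorem symbol_vanishes_iff_contraction_vanishes
    {V : Type*} [NormedAddCommGroup V] [InnerProductSpace ℝ V]
    [FiniteDimensional ℝ V] {q : ℕ}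
    (φ : V [⋀^Fin (q + 1)]→ₗ[ℝ] ℝ) (ζ : V) :
    (∀ v : Fin (q + 1) → V,
        (∑ i : Fin (q + 1), (-1 : ℝ) ^ (i : ℕ) * ⟪ζ, v i⟫ * φ (Fin.cons ζ (Fin.removeNth i v))) = 0) ↔
      (∀ w : Fin q → V, φ (Fin.cons ζ w) = 0) := by
  constructor
  · intro h w
    by_cases hz : ζ = 0
    · exact φ.map_coord_zero 0 (by simp [hz])
    · have key := h (Fin.cons ζ w)
      rw [Fin.sum_univ_succ] at key
      have hzero : ∀ i : Fin q,
          φ (Fin.cons ζ (Fin.removeNth (Fin.succ i) (Fin.cons (α := fun _ => V) ζ w))) = 0 := by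
        intro i
        have hq : 0 < q := i.pos
        refine φ.map_eq_zero_of_eq _ (i := 0) (j := 1) ?_ ?_
        · have h1 : (1 : Fin (q + 1)) = Fin.succ ⟨0, hq⟩ := by
            rw [Fin.ext_iff]
            simp [Fin.val_one']
            omega
          rw [h1, Fin.cons_succ]
          simp [Fin.removeNth, Fin.succAbove, Fin.lt_def]
        · refine Fin.ne_of_val_ne ?_
          simp [Fin.val_one']
          omega
      simp only [hzero, mul_zero, Finset.sum_const_zero, add_zero,
        Fin.cons_zero, Fin.removeNth_zero, Fin.tail_cons, Fin.val_zero, pow_zero,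
        one_mul] at key
      have hζ : ⟪ζ, ζ⟫ ≠ 0 := by
        exact inner_self_ne_zero.2 hz
      exact (mul_eq_zero.1 key).resolve_left hζ
  · intro h v
    refine Finset.sum_eq_zero fun i _ => ?_
    rw [h, mul_zero]
end

section
/- Let V be a finite-dimensional real inner product space, p ≥ 1, let φ be an alternating p-form on V (a constant-coefficient, i.e. parallel, form), let U ⊆ V be open, and let f : U → ℝ be twice continuously differentiable. For x ∈ U let H_x denote the symmetric Hessian endomorphism of V determined by ⟨H_x v, w⟩ = D²f(x)(v, w), and let ∇f(x) be the gradient. Then for every x ∈ U and all vectors v_1,…,v_p ∈ V, Σ_{i=1}^p (−1)^{i−1} · D_{v_i}[ y ↦ φ(∇f(y), v_1,…,v_{i−1}, v_{i+1},…,v_p) ](x) = Σ_{j=1}^p φ(v_1,…,v_{j−1}, H_x v_j, v_{j+1},…,v_p); that is, the exterior derivative of the (p−1)-form d^φ f = ∇f ⌟ φ equals λ_φ(Hess f), so that dd^φ f = H^φ(f) in the parallel case (Theorem 2.2 with ∇_{∇f}φ = 0). -/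
open scoped RealInnerProductSpace

private lemma alt_cons_removeNth {V : Type*} [NormedAddCommGroup V] [InnerProductSpace ℝ V]
    {q : ℕ} (φ : V [⋀^Fin (q + 1)]→ₗ[ℝ] ℝ) (v : Fin (q + 1) → V) (i : Fin (q + 1)) (u : V) :
    φ (Fin.cons u (Fin.removeNth i v)) = (-1 : ℝ) ^ (i : ℕ) * φ (Function.update v i u) := by
  have hcomp : Fin.cons u (Fin.removeNth i v)
      = (Function.update v i u) ∘ ⇑(i.cycleRange⁻¹ : Equiv.Perm (Fin (q + 1))) := by
    funext j
    refine Fin.cases ?_ (fun k => ?_) j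
    · show u = Function.update v i u ((Equiv.symm i.cycleRange) 0)
      rw [Fin.cycleRange_symm_zero, Function.update_self]
    · show (i.removeNth v) k = Function.update v i u ((Equiv.symm i.cycleRange) k.succ)
      rw [Fin.cycleRange_symm_succ, Function.update_of_ne (Fin.succAbove_ne i k)]
      rfl
  rw [hcomp, φ.map_perm]
  rw [Equiv.Perm.sign_inv, Fin.sign_cycleRange]
  simp [Units.smul_def, zsmul_eq_mul]

/-- **Theorem 2.2** (Harvey–Lawson), Euclidean (parallel) case.  For a constant-coefficient
`p`-form `φ` and a `C²` function `f` on an open set `U`, the exterior derivative of the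
`(p-1)`-form `d^φ f = ∇f ⌟ φ` equals `λ_φ(Hess f)`; i.e. `dd^φ f = H^φ(f)`. -/
theorem exterior_derivative_of_dphi_eq_lambda_hessian
    {V : Type*} [NormedAddCommGroup V] [InnerProductSpace ℝ V]
    [FiniteDimensional ℝ V] {q : ℕ}
    (φ : V [⋀^Fin (q + 1)]→ₗ[ℝ] ℝ)
    (U : Set V) (hU : IsOpen U) (f : V → ℝ) (hf : ContDiffOn ℝ 2 f U)
    (H : V → V →ₗ[ℝ] V)
    (hH : ∀ x ∈ U, ∀ v w : V, ⟪H x v, w⟫ = fderiv ℝ (fderiv ℝ f) x v w) :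
    ∀ x ∈ U, ∀ v : Fin (q + 1) → V,
      (∑ i : Fin (q + 1), (-1 : ℝ) ^ (i : ℕ) *
          fderiv ℝ (fun y => φ (Fin.cons (gradient f y) (Fin.removeNth i v))) x (v i)) =
        ∑ j, φ (Function.update v j (H x (v j))) := by
  intro x hx v
  -- `f` is C² at `x`, so `fderiv ℝ f` is differentiable at `x`
  have hcd : ContDiffAt ℝ 2 f x := hf.contDiffAt (hU.mem_nhds hx)
  have hD : ContDiffAt ℝ 1 (fderiv ℝ f) x := hcd.fderiv_right (by norm_num)
  have hDdiff : DifferentiableAt ℝ (fderiv ℝ f) x := hD.differentiableAt (by norm_num)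
  set e : StrongDual ℝ V ≃L[ℝ] V :=
    (InnerProductSpace.toDual ℝ V).symm.toContinuousLinearEquiv with he
  -- the gradient has derivative `G` at `x`
  set G : V →L[ℝ] V := (e : StrongDual ℝ V →L[ℝ] V).comp (fderiv ℝ (fderiv ℝ f) x)
    with hG
  have hgrad : HasFDerivAt (gradient f) G x := by
    have : HasFDerivAt (fun y => e (fderiv ℝ f y)) G x :=
      (e : StrongDual ℝ V →L[ℝ] V).hasFDerivAt.comp x hDdiff.hasFDerivAt
    exact this
  have hGH : ∀ u : V, G u = H x u := by
    intro u
    refine ext_inner_right ℝ fun w => ?_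
    rw [hH x hx u w]
    simp only [hG, ContinuousLinearMap.coe_comp', Function.comp_apply, he]
    exact InnerProductSpace.toDual_symm_apply
  -- compute each summand
  have hterm : ∀ i : Fin (q + 1),
      fderiv ℝ (fun y => φ (Fin.cons (gradient f y) (Fin.removeNth i v))) x (v i)
        = φ (Fin.cons (H x (v i)) (Fin.removeNth i v)) := by
    intro i
    set c := Fin.removeNth i v with hc
    set L : V →ₗ[ℝ] ℝ :=
      { toFun := fun u => φ (Fin.cons u c)
        map_add' := fun a b => φ.toMultilinearMap.cons_add c a b
        map_smul' := fun r a => φ.toMultilinearMap.cons_smul c r a } with hL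
    have hcomp : HasFDerivAt (fun y => φ (Fin.cons (gradient f y) c))
        ((LinearMap.toContinuousLinearMap L).comp G) x :=
      (LinearMap.toContinuousLinearMap L).hasFDerivAt.comp x hgrad
    rw [hcomp.fderiv]
    simp only [ContinuousLinearMap.coe_comp', Function.comp_apply,
      LinearMap.coe_toContinuousLinearMap']
    rw [hGH (v i)]
    rfl
  calc (∑ i : Fin (q + 1), (-1 : ℝ) ^ (i : ℕ) *
          fderiv ℝ (fun y => φ (Fin.cons (gradient f y) (Fin.removeNth i v))) x (v i))
      = ∑ i : Fin (q + 1), (-1 : ℝ) ^ (i : ℕ) *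
          ((-1 : ℝ) ^ (i : ℕ) * φ (Function.update v i (H x (v i)))) := by
        refine Finset.sum_congr rfl fun i _ => ?_
        rw [hterm i, alt_cons_removeNth]
    _ = ∑ j, φ (Function.update v j (H x (v j))) := by
        refine Finset.sum_congr rfl fun i _ => ?_
        rw [← mul_assoc, ← pow_add, ← two_mul, pow_mul]
        norm_num
end

section
/- Let V be a finite-dimensional real inner product space, p ≥ 1, let φ be an alternating p-form on V of comass at most one, let U ⊆ V be open, and let f, g : U → ℝ be smooth and φ-plurisubharmonic. Then the function x ↦ log(e^{f(x)} + e^{g(x)}) is φ-plurisubharmonic on U. -/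
open scoped RealInnerProductSpace

/-- `f` is smooth and `φ`-plurisubharmonic on the open set `U`: the trace of its Hessian on
every `φ`-plane is nonnegative at every point of `U`. -/
def PshOn {V : Type*} [NormedAddCommGroup V] [InnerProductSpace ℝ V]
    {p : ℕ} (φ : V [⋀^Fin p]→ₗ[ℝ] ℝ) (U : Set V) (f : V → ℝ) : Prop :=
  ContDiffOn ℝ (⊤ : ℕ∞) f U ∧
  ∀ x ∈ U, ∀ e : Fin p → V, Orthonormal ℝ e → φ e = 1 →
    0 ≤ ∑ j, fderiv ℝ (fderiv ℝ f) x (e j) (e j)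

set_option maxHeartbeats 1000000 in
/-- **Proposition 1.5(ii)** (Harvey–Lawson).  If `f` and `g` are `φ`-plurisubharmonic, then
`log(e^f + e^g)` is `φ`-plurisubharmonic. -/
theorem psh_log_sum_exp
    {V : Type*} [NormedAddCommGroup V] [InnerProductSpace ℝ V]
    [FiniteDimensional ℝ V] {p : ℕ} (hp : 1 ≤ p)
    (φ : V [⋀^Fin p]→ₗ[ℝ] ℝ)
    (hcomass : ∀ u : Fin p → V, Orthonormal ℝ u → φ u ≤ 1)
    (U : Set V) (hU : IsOpen U) (f g : V → ℝ)
    (hf : PshOn φ U f) (hg : PshOn φ U g) :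
    PshOn φ U (fun x => Real.log (Real.exp (f x) + Real.exp (g x))) := by
  obtain ⟨hfs, hfH⟩ := hf
  obtain ⟨hgs, hgH⟩ := hg
  have hEpos : ∀ y : V, 0 < Real.exp (f y) + Real.exp (g y) := fun y => by positivity
  set h : V → ℝ := fun x => Real.log (Real.exp (f x) + Real.exp (g x)) with hh
  set D : V → (V →L[ℝ] ℝ) := fun y =>
    ((Real.exp (f y) + Real.exp (g y))⁻¹) •
      (Real.exp (f y) • fderiv ℝ f y + Real.exp (g y) • fderiv ℝ g y) with hD
  -- smoothness of f, g at points of U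
  have hfx : ∀ y ∈ U, ContDiffAt ℝ (⊤ : ℕ∞) f y := fun y hy => hfs.contDiffAt (hU.mem_nhds hy)
  have hgx : ∀ y ∈ U, ContDiffAt ℝ (⊤ : ℕ∞) g y := fun y hy => hgs.contDiffAt (hU.mem_nhds hy)
  have key : ∀ y ∈ U, HasFDerivAt h (D y) y := by
    intro y hy
    have hdf : HasFDerivAt f (fderiv ℝ f y) y :=
      ((hfx y hy).differentiableAt (by simp)).hasFDerivAt
    have hdg : HasFDerivAt g (fderiv ℝ g y) y :=
      ((hgx y hy).differentiableAt (by simp)).hasFDerivAt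
    exact (hdf.exp.add hdg.exp).log (hEpos y).ne'
  constructor
  · exact (hfs.exp.add hgs.exp).log (fun y _ => (hEpos y).ne')
  · intro x hx e he hφe
    -- second derivatives of f and g at x
    have hF2 : HasFDerivAt (fderiv ℝ f) (fderiv ℝ (fderiv ℝ f) x) x := by
      have : ContDiffAt ℝ (⊤ : ℕ∞) (fderiv ℝ f) x := (hfx x hx).fderiv_right (by exact_mod_cast (by simp : (⊤:ℕ∞) + 1 ≤ ⊤))
      exact (this.differentiableAt (by simp)).hasFDerivAt
    have hG2 : HasFDerivAt (fderiv ℝ g) (fderiv ℝ (fderiv ℝ g) x) x := by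
      have : ContDiffAt ℝ (⊤ : ℕ∞) (fderiv ℝ g) x := (hgx x hx).fderiv_right (by exact_mod_cast (by simp : (⊤:ℕ∞) + 1 ≤ ⊤))
      exact (this.differentiableAt (by simp)).hasFDerivAt
    have hdf : HasFDerivAt f (fderiv ℝ f x) x :=
      ((hfx x hx).differentiableAt (by simp)).hasFDerivAt
    have hdg : HasFDerivAt g (fderiv ℝ g x) x :=
      ((hgx x hx).differentiableAt (by simp)).hasFDerivAt
    set u : ℝ := Real.exp (f x)
    set w : ℝ := Real.exp (g x)
    set F : V →L[ℝ] ℝ := fderiv ℝ f x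
    set G : V →L[ℝ] ℝ := fderiv ℝ g x
    set F2 := fderiv ℝ (fderiv ℝ f) x
    set G2 := fderiv ℝ (fderiv ℝ g) x
    set E : ℝ := u + w with hE
    have hEne : E ≠ 0 := (hEpos x).ne'
    -- derivative of E⁻¹
    have hEd : HasFDerivAt (fun y => Real.exp (f y) + Real.exp (g y)) (u • F + w • G) x :=
      hdf.exp.add hdg.exp
    have hinv : HasFDerivAt (fun y => (Real.exp (f y) + Real.exp (g y))⁻¹)
        ((-(E ^ 2)⁻¹) • (u • F + w • G)) x :=
      (hasDerivAt_inv hEne).comp_hasFDerivAt x hEd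
    -- derivative of Φ
    have hΦ : HasFDerivAt (fun y => Real.exp (f y) • fderiv ℝ f y + Real.exp (g y) • fderiv ℝ g y)
        ((u • F2 + (u • F).smulRight F) + (w • G2 + (w • G).smulRight G)) x :=
      (hdf.exp.smul hF2).add (hdg.exp.smul hG2)
    have hDd : HasFDerivAt D
        (E⁻¹ • ((u • F2 + (u • F).smulRight F) + (w • G2 + (w • G).smulRight G)) +
          ((-(E ^ 2)⁻¹) • (u • F + w • G)).smulRight (u • F + w • G)) x :=
      hinv.smul hΦ
    have hev : fderiv ℝ h =ᶠ[nhds x] D := by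
      filter_upwards [hU.mem_nhds hx] with y hy
      exact (key y hy).fderiv
    have heq : fderiv ℝ (fderiv ℝ h) x =
        E⁻¹ • ((u • F2 + (u • F).smulRight F) + (w • G2 + (w • G).smulRight G)) +
          ((-(E ^ 2)⁻¹) • (u • F + w • G)).smulRight (u • F + w • G) := by
      rw [hev.fderiv_eq, hDd.fderiv]
    rw [heq]
    have hterm : ∀ j : Fin p,
        (E⁻¹ • ((u • F2 + (u • F).smulRight F) + (w • G2 + (w • G).smulRight G)) +
          ((-(E ^ 2)⁻¹) • (u • F + w • G)).smulRight (u • F + w • G)) (e j) (e j) =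
        E⁻¹ * u * F2 (e j) (e j) + E⁻¹ * w * G2 (e j) (e j) +
          (E ^ 2)⁻¹ * u * w * (F (e j) - G (e j)) ^ 2 := by
      intro j
      simp only [ContinuousLinearMap.add_apply, ContinuousLinearMap.coe_smul',
        Pi.smul_apply, ContinuousLinearMap.smulRight_apply, ContinuousLinearMap.smul_apply,
        smul_eq_mul]
      have hu : (0 : ℝ) < u := Real.exp_pos _
      have hw : (0 : ℝ) < w := Real.exp_pos _
      field_simp
      ring
    calc (0 : ℝ) ≤ E⁻¹ * u * (∑ j, F2 (e j) (e j)) + E⁻¹ * w * (∑ j, G2 (e j) (e j)) +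
          ∑ j, (E ^ 2)⁻¹ * u * w * (F (e j) - G (e j)) ^ 2 := by
          have h1 : (0 : ℝ) ≤ ∑ j, F2 (e j) (e j) := hfH x hx e he hφe
          have h2 : (0 : ℝ) ≤ ∑ j, G2 (e j) (e j) := hgH x hx e he hφe
          have hEp := hEpos x
          have hu : (0 : ℝ) < u := Real.exp_pos _
          have hw : (0 : ℝ) < w := Real.exp_pos _
          have h3 : (0 : ℝ) ≤ ∑ j, (E ^ 2)⁻¹ * u * w * (F (e j) - G (e j)) ^ 2 :=
            Finset.sum_nonneg fun j _ => by positivity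
          have h4 : (0 : ℝ) ≤ E⁻¹ * u * (∑ j, F2 (e j) (e j)) := by positivity
          have h5 : (0 : ℝ) ≤ E⁻¹ * w * (∑ j, G2 (e j) (e j)) := by positivity
          linarith
      _ = ∑ j, (E⁻¹ * u * F2 (e j) (e j) + E⁻¹ * w * G2 (e j) (e j) +
            (E ^ 2)⁻¹ * u * w * (F (e j) - G (e j)) ^ 2) := by
          rw [Finset.sum_add_distrib, Finset.sum_add_distrib, Finset.mul_sum, Finset.mul_sum]
      _ = _ := by
          exact (Finset.sum_congr rfl fun j _ => (hterm j)).symm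
end

section
/- Let V be a finite-dimensional real inner product space and p ≥ 1. In the p-th exterior power ⋀^p V, let G be the set of unit simple p-vectors, let φ : ⋀^p V → ℝ be a linear functional with φ(ξ) ≤ 1 for all ξ ∈ G, let G(φ) = {ξ ∈ G : φ(ξ) = 1}, and let K be the convex hull of G. Then: (1) the convex hull of G(φ) equals {ξ ∈ K : φ(ξ) = 1}; (2) the convex hull of G(φ) is contained in the frontier of K; and (3) if ξ lies in the frontier of K and t·ξ belongs to the convex hull of G(φ) for some t > 0, then ξ itself belongs to the convex hull of G(φ). (Hence ch G(φ) = {φ = 1} ∩ ∂K = Λ₊(φ) ∩ ∂K, where Λ₊(φ) is the convex cone of nonnegative multiples of elements of ch G(φ); in particular a p-vector ξ of mass norm one satisfies φ(ξ) = 1 if and only if ξ ∈ ch G(φ).) -/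
open scoped RealInnerProductSpace

set_option maxHeartbeats 1000000

/-- **Lemma 5.14 and Corollary 5.15** (Harvey–Lawson).  In the `p`-th exterior power of `V`,
let `G` be the set of unit simple `p`-vectors, `φ` a linear functional with `φ ≤ 1` on `G`
(comass at most one), `Gφ = {ξ ∈ G : φ ξ = 1}` the set of `φ`-planes, and `K` the convex
hull of `G` (the mass-norm unit ball).  Then `ch Gφ = {ξ ∈ K : φ ξ = 1}`, `ch Gφ ⊆ ∂K`, and
any `ξ ∈ ∂K` with `t • ξ ∈ ch Gφ` for some `t > 0` already lies in `ch Gφ`.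
(The topology on the exterior power is pinned down uniquely by the Hausdorff topological
vector space assumptions, since everything is finite dimensional.) -/
theorem convexHull_phi_planes_eq
    {V : Type*} [NormedAddCommGroup V] [InnerProductSpace ℝ V]
    [FiniteDimensional ℝ V] {p : ℕ} (hp : 1 ≤ p)
    [TopologicalSpace (⋀[ℝ]^p V)] [IsTopologicalAddGroup (⋀[ℝ]^p V)]
    [ContinuousSMul ℝ (⋀[ℝ]^p V)] [T2Space (⋀[ℝ]^p V)]
    (φ : (⋀[ℝ]^p V) →ₗ[ℝ] ℝ)
    (G : Set (⋀[ℝ]^p V))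
    (hG : ∀ ξ : ⋀[ℝ]^p V, ξ ∈ G ↔ ∃ e : Fin p → V, Orthonormal ℝ e ∧
      (ξ : ExteriorAlgebra ℝ V) = ExteriorAlgebra.ιMulti ℝ p e)
    (hφ : ∀ ξ ∈ G, φ ξ ≤ 1)
    (Gφ : Set (⋀[ℝ]^p V)) (hGφ : Gφ = {ξ ∈ G | φ ξ = 1})
    (K : Set (⋀[ℝ]^p V)) (hK : K = convexHull ℝ G) :
    convexHull ℝ Gφ = {ξ ∈ K | φ ξ = 1} ∧
    convexHull ℝ Gφ ⊆ frontier K ∧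
    ∀ ξ ∈ frontier K, (∃ t : ℝ, 0 < t ∧ t • ξ ∈ convexHull ℝ Gφ) → ξ ∈ convexHull ℝ Gφ := by
  classical
  subst hGφ hK
  set Gφ : Set (⋀[ℝ]^p V) := {ξ ∈ G | φ ξ = 1} with hGφdef
  set K : Set (⋀[ℝ]^p V) := convexHull ℝ G with hKdef
  have hKconv : Convex ℝ K := convex_convexHull ℝ G
  -- φ ≤ 1 on K
  have hφK : ∀ x ∈ K, φ x ≤ 1 :=
    fun x hx => convexHull_min (fun ξ hξ => hφ ξ hξ)
      (convex_halfSpace_le (LinearMap.isLinear φ) 1) hx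
  -- G is symmetric
  have hGsymm : ∀ ξ ∈ G, -ξ ∈ G := by
    intro ξ hξ
    obtain ⟨e, he, hcoe⟩ := (hG ξ).1 hξ
    set c : Fin p → ℝ := fun i => if i = (⟨0, hp⟩ : Fin p) then (-1 : ℝ) else 1 with hc
    refine (hG (-ξ)).2 ⟨fun i => c i • e i, ?_, ?_⟩
    · rw [orthonormal_iff_ite] at he ⊢
      intro i j
      rw [real_inner_smul_left, real_inner_smul_right, he i j]
      by_cases hij : i = j
      · subst hij; simp only [if_pos rfl, mul_one, hc]
        split_ifs <;> norm_num
      · simp [hij]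
    · have hsmul : ExteriorAlgebra.ιMulti ℝ p (fun i => c i • e i)
          = (∏ i, c i) • ExteriorAlgebra.ιMulti ℝ p e :=
        (ExteriorAlgebra.ιMulti ℝ p).toMultilinearMap.map_smul_univ c e
      have hprod : (∏ i, c i) = -1 := by
        rw [hc]
        rw [Finset.prod_ite_eq' Finset.univ (⟨0, hp⟩ : Fin p) (fun _ => (-1 : ℝ))]
        simp
      have : ((-ξ : ⋀[ℝ]^p V) : ExteriorAlgebra ℝ V) = -(ξ : ExteriorAlgebra ℝ V) := rfl
      rw [this, hcoe, hsmul, hprod, neg_one_smul]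
  -- Part 1
  have part1 : convexHull ℝ Gφ = {ξ ∈ K | φ ξ = 1} := by
    apply Set.Subset.antisymm
    · refine convexHull_min (fun ξ hξ => ⟨subset_convexHull ℝ G hξ.1, hξ.2⟩) ?_
      exact hKconv.inter (convex_hyperplane (LinearMap.isLinear φ) 1)
    · rintro ξ ⟨hξK, hξ1⟩
      rw [hKdef, convexHull_eq] at hξK
      obtain ⟨ι, t, w, z, hw0, hw1, hzG, hcm⟩ := hξK
      have hφcm : ∑ i ∈ t, w i * φ (z i) = 1 := by
        have := congrArg φ hcm
        rw [Finset.centerMass_eq_of_sum_1 _ _ hw1] at this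
        rw [← hξ1, ← this, map_sum]
        simp [smul_eq_mul]
      have hsum0 : ∑ i ∈ t, w i * (1 - φ (z i)) = 0 := by
        have : ∑ i ∈ t, w i * (1 - φ (z i))
            = (∑ i ∈ t, w i) - ∑ i ∈ t, w i * φ (z i) := by
          rw [← Finset.sum_sub_distrib]; congr 1; ext i; ring
        rw [this, hw1, hφcm, sub_self]
      have hkey : ∀ i ∈ t, w i ≠ 0 → z i ∈ Gφ := by
        intro i hi hwi
        have h0 : w i * (1 - φ (z i)) = 0 :=
          (Finset.sum_eq_zero_iff_of_nonneg (fun j hj =>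
            mul_nonneg (hw0 j hj) (by linarith [hφ (z j) (hzG j hj)]))).1 hsum0 i hi
        have : φ (z i) = 1 := by
          rcases mul_eq_zero.1 h0 with h | h
          · exact absurd h hwi
          · linarith
        exact ⟨hzG i hi, this⟩
      rw [← hcm, ← Finset.centerMass_filter_ne_zero z]
      refine Finset.centerMass_mem_convexHull _ (fun i hi => hw0 i (Finset.mem_filter.1 hi).1)
        ?_ (fun i hi => hkey i (Finset.mem_filter.1 hi).1 (Finset.mem_filter.1 hi).2)
      rw [Finset.sum_filter_ne_zero, hw1]
      norm_num
  -- Part 2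
  have part2 : convexHull ℝ Gφ ⊆ frontier K := by
    intro ξ hξ
    have h1 : ξ ∈ K ∧ φ ξ = 1 := by rw [part1] at hξ; exact hξ
    have hnotint : ξ ∉ interior K := by
      intro hint
      have hcont : Continuous fun s : ℝ => s • ξ := continuous_id.smul continuous_const
      have hopen : IsOpen ((fun s : ℝ => s • ξ) ⁻¹' interior K) :=
        isOpen_interior.preimage hcont
      have hmem : (1 : ℝ) ∈ (fun s : ℝ => s • ξ) ⁻¹' interior K := by
        simp only [Set.mem_preimage, one_smul]; exact hint
      obtain ⟨ε, hε, hball⟩ := Metric.isOpen_iff.1 hopen 1 hmem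
      have ht : (1 + ε / 2 : ℝ) ∈ (fun s : ℝ => s • ξ) ⁻¹' interior K := by
        apply hball
        rw [Metric.mem_ball, Real.dist_eq]
        rw [show (1 + ε / 2 - 1 : ℝ) = ε / 2 by ring, abs_of_pos (by linarith)]
        linarith
      have hφt : φ ((1 + ε / 2 : ℝ) • ξ) ≤ 1 :=
        hφK _ (interior_subset ht)
      rw [map_smul, smul_eq_mul, h1.2, mul_one] at hφt
      linarith
    exact ⟨subset_closure h1.1, hnotint⟩
  refine ⟨part1, part2, ?_⟩
  -- Part 3
  rintro ξ hξfr ⟨t, ht, htmem⟩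
  have hGφne : Gφ.Nonempty := by
    by_contra h
    rw [Set.not_nonempty_iff_eq_empty] at h
    rw [h, convexHull_empty] at htmem
    exact htmem
  have hGne : G.Nonempty := ⟨hGφne.choose, hGφne.choose_spec.1⟩
  -- spanning facts
  set n := Module.finrank ℝ V with hn
  set b := stdOrthonormalBasis ℝ V with hb
  set T : Set (ExteriorAlgebra ℝ V) :=
    Set.range (fun r : Fin p → Fin n => ExteriorAlgebra.ιMulti ℝ p (b ∘ r)) with hT
  have hTfin : T.Finite := Set.finite_range _
  have hspanT : ∀ v : Fin p → V, ExteriorAlgebra.ιMulti ℝ p v ∈ Submodule.span ℝ T := by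
    intro v
    have hv : (fun i => ∑ j, b.repr (v i) j • b j) = v := by
      funext i; exact b.sum_repr (v i)
    have hexp := (ExteriorAlgebra.ιMulti ℝ p).toMultilinearMap.map_sum
      (g := fun i j => b.repr (v i) j • b j)
    rw [hv] at hexp
    have : ExteriorAlgebra.ιMulti ℝ p v
        = ∑ r : Fin p → Fin n, (∏ i, b.repr (v i) (r i)) • ExteriorAlgebra.ιMulti ℝ p (b ∘ r) := by
      rw [show (ExteriorAlgebra.ιMulti ℝ p) v
          = (ExteriorAlgebra.ιMulti ℝ p).toMultilinearMap v from rfl, hexp]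
      congr 1; funext r
      exact (ExteriorAlgebra.ιMulti ℝ p).toMultilinearMap.map_smul_univ
        (fun i => b.repr (v i) (r i)) (fun i => b (r i))
    rw [this]
    exact Submodule.sum_mem _ (fun r _ =>
      Submodule.smul_mem _ _ (Submodule.subset_span ⟨r, rfl⟩))
  have hTle : Submodule.span ℝ T
      ≤ Submodule.span ℝ ((((↑) : (⋀[ℝ]^p V) → ExteriorAlgebra ℝ V)) '' G) := by
    rw [Submodule.span_le]
    rintro x ⟨r, rfl⟩
    dsimp only
    by_cases hr : Function.Injective r
    · apply Submodule.subset_span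
      refine ⟨⟨ExteriorAlgebra.ιMulti ℝ p (b ∘ r),
        ExteriorAlgebra.ιMulti_range ℝ p ⟨b ∘ r, rfl⟩⟩, ?_, rfl⟩
      exact (hG _).2 ⟨b ∘ r, b.orthonormal.comp r hr, rfl⟩
    · have hbr : ¬Function.Injective (b ∘ r) := by
        intro h
        exact hr fun i j hij => h (by simp [Function.comp, hij])
      rw [(ExteriorAlgebra.ιMulti ℝ p).map_eq_zero_of_not_injective _ hbr]
      exact Submodule.zero_mem _
  have hple : (⋀[ℝ]^p V : Submodule ℝ (ExteriorAlgebra ℝ V)) ≤ Submodule.span ℝ T := by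
    rw [← ExteriorAlgebra.ιMulti_span_fixedDegree, Submodule.span_le]
    rintro x ⟨v, rfl⟩
    exact hspanT v
  haveI hfd : FiniteDimensional ℝ (⋀[ℝ]^p V) := by
    haveI := FiniteDimensional.span_of_finite ℝ hTfin
    exact Submodule.finiteDimensional_of_le hple
  have hspanG : Submodule.span ℝ G = (⊤ : Submodule ℝ (⋀[ℝ]^p V)) := by
    apply Submodule.map_injective_of_injective (Submodule.injective_subtype (⋀[ℝ]^p V))
    rw [Submodule.map_span, Submodule.map_top, Submodule.range_subtype]
    apply le_antisymm
    · rw [Submodule.span_le]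
      rintro x ⟨ξ, _, rfl⟩
      exact ξ.2
    · exact hple.trans hTle
  -- 0 is in the interior of K
  have h0int : (0 : ⋀[ℝ]^p V) ∈ interior K := by
    -- transfer to a normed space
    set m := Module.finrank ℝ (⋀[ℝ]^p V) with hm
    set eL : (⋀[ℝ]^p V) ≃L[ℝ] (Fin m → ℝ) :=
      (Module.finBasis ℝ (⋀[ℝ]^p V)).equivFun.toContinuousLinearEquiv with heL
    have himg : eL '' K = convexHull ℝ (eL '' G) := by
      have h := LinearMap.image_convexHull
        ((eL.toLinearEquiv : (⋀[ℝ]^p V) →ₗ[ℝ] (Fin m → ℝ))) G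
      rw [hKdef]
      simpa using h
    have hspan' : Submodule.span ℝ (eL '' G) = ⊤ := by
      rw [show (eL '' G : Set (Fin m → ℝ))
          = (eL.toLinearEquiv : (⋀[ℝ]^p V) →ₗ[ℝ] (Fin m → ℝ)) '' G from rfl,
        ← Submodule.map_span, hspanG, Submodule.map_top, LinearMap.range_eq_top]
      exact eL.surjective
    have haff' : affineSpan ℝ (eL '' G) = ⊤ := by
      rw [AffineSubspace.affineSpan_eq_top_iff_vectorSpan_eq_top_of_nonempty ℝ _ _ (hGne.image _),
        eq_top_iff, ← hspan', Submodule.span_le]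
      rintro x ⟨ξ, hξ, rfl⟩
      have hvsub : eL ξ - eL (-ξ) ∈ vectorSpan ℝ (eL '' G) :=
        vsub_mem_vectorSpan ℝ ⟨ξ, hξ, rfl⟩ ⟨-ξ, hGsymm ξ hξ, rfl⟩
      have h2 : eL ξ - eL (-ξ) = (2 : ℝ) • eL ξ := by
        rw [map_neg, sub_neg_eq_add, two_smul]
      rw [h2] at hvsub
      have := Submodule.smul_mem _ ((2 : ℝ)⁻¹) hvsub
      rwa [smul_smul, inv_mul_cancel₀ (by norm_num), one_smul] at this
    have hne : (interior (convexHull ℝ (eL '' G))).Nonempty :=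
      interior_convexHull_nonempty_iff_affineSpan_eq_top.2 haff'
    obtain ⟨y, hy⟩ := hne
    rw [← himg, show (⇑eL : (⋀[ℝ]^p V) → (Fin m → ℝ)) = ⇑eL.toHomeomorph from rfl,
      ← Homeomorph.image_interior eL.toHomeomorph] at hy
    obtain ⟨x, hx, rfl⟩ := hy
    -- -x is also interior
    have hGneg : -G = G := by
      ext a
      constructor
      · intro h
        have : -a ∈ G := Set.mem_neg.1 h
        simpa using hGsymm _ this
      · intro h
        exact Set.mem_neg.2 (hGsymm a h)
    have hKneg : -K = K := by
      rw [hKdef, ← convexHull_neg, hGneg]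
    have hmx : -x ∈ interior K := by
      have h1 : -x ∈ (fun a => -a) '' interior K := ⟨x, hx, rfl⟩
      have h2 : (fun a : ⋀[ℝ]^p V => -a) '' interior K
          = interior ((fun a : ⋀[ℝ]^p V => -a) '' K) :=
        (Homeomorph.neg (⋀[ℝ]^p V)).image_interior K
      have h3 : (fun a : ⋀[ℝ]^p V => -a) '' K = -K := Set.image_neg_eq_neg
      rw [h2, h3, hKneg] at h1
      exact h1
    have hconv : Convex ℝ (interior K) := hKconv.interior
    have := hconv hx hmx (by norm_num : (0:ℝ) ≤ 1/2) (by norm_num : (0:ℝ) ≤ 1/2) (by norm_num)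
    rwa [smul_neg, add_neg_cancel] at this
  -- trichotomy on t
  rcases lt_trichotomy t 1 with h | h | h
  · exfalso
    have hξcl : ξ ∈ closure K := hξfr.1
    have : t • ξ ∈ interior K := by
      have hcombo := hKconv.combo_interior_closure_mem_interior h0int hξcl
        (a := 1 - t) (b := t) (by linarith) ht.le (by ring)
      rwa [smul_zero, zero_add] at hcombo
    exact (part2 htmem).2 this
  · subst h
    rwa [one_smul] at htmem
  · exfalso
    have htK : t • ξ ∈ K := by rw [part1] at htmem; exact htmem.1
    have h1t : (0:ℝ) < 1 / t := by positivity
    have : ξ ∈ interior K := by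
      have hcombo := hKconv.combo_interior_closure_mem_interior h0int (subset_closure htK)
        (a := 1 - 1 / t) (b := 1 / t)
        (by rw [sub_pos, div_lt_one ht]; exact h) h1t.le (by ring)
      rwa [smul_zero, zero_add, smul_smul, one_div, inv_mul_cancel₀ (by linarith), one_smul]
        at hcombo
    exact hξfr.2 this
end

section
/- Let V be a finite-dimensional real inner product space, p ≥ 1, let φ be an alternating p-form on V of comass at most one, and let u ∈ V be a unit vector. Define the alternating p-form φ_u = φ − u♭ ∧ (u ⌟ φ), i.e. φ_u(v_1,…,v_p) = φ(v_1,…,v_p) − Σ_{i=1}^p (−1)^{i−1} ⟨u, v_i⟩ φ(u, v_1,…,v_{i−1}, v_{i+1},…,v_p). Then φ_u(e_1,…,e_p) ≥ 0 for every φ-plane (e_1,…,e_p), and there exists a φ-plane (e_1,…,e_p) with φ_u(e_1,…,e_p) = 0 if and only if there exists a φ-plane (e_1,…,e_p) with u ∈ span{e_1,…,e_p}. (That is, the restricted form φ_u = u ⌟ (u ∧ φ) lies on the boundary of the cone Λ⁺(φ) of forms nonnegative on G(φ) exactly when u lies in the span of some φ-plane.) -/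
open scoped RealInnerProductSpace

set_option linter.unusedSectionVars false

section Aux
variable {V : Type*} [NormedAddCommGroup V] [InnerProductSpace ℝ V] {q : ℕ}

private lemma cons_eq_insertNth_comp (i : Fin (q + 1)) (x : V)
    (m : Fin q → V) : Fin.cons x m = (i.insertNth x m) ∘ ⇑i.cycleRange.symm := by
  funext j
  refine Fin.cases ?_ (fun k => ?_) j
  · simp [Fin.cycleRange_symm_zero]
  · simp [Fin.cycleRange_symm_succ]

private lemma phi_cons_eq (φ : V [⋀^Fin (q + 1)]→ₗ[ℝ] ℝ) (i : Fin (q + 1)) (x : V)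
    (m : Fin q → V) :
    φ (Fin.cons x m) = (-1 : ℝ) ^ (i : ℕ) * φ (i.insertNth x m) := by
  rw [cons_eq_insertNth_comp i x m]
  have h := φ.map_perm (i.insertNth x m) i.cycleRange.symm
  rw [h, show (Equiv.symm i.cycleRange) = i.cycleRange⁻¹ from rfl,
    Equiv.Perm.sign_inv, Fin.sign_cycleRange, Units.smul_def]
  rw [zsmul_eq_mul]
  push_cast
  ring

private lemma first_variation (φ : V [⋀^Fin (q + 1)]→ₗ[ℝ] ℝ)
    (hcomass : ∀ e : Fin (q + 1) → V, Orthonormal ℝ e → φ e ≤ 1)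
    {e : Fin (q + 1) → V} (he : Orthonormal ℝ e) (hφe : φ e = 1)
    {w : V} (hw : ∀ j, ⟪e j, w⟫ = 0) (i : Fin (q + 1)) :
    φ (Function.update e i w) = 0 := by
  rcases eq_or_ne w 0 with rfl | hw0
  · exact φ.map_update_zero e i
  have hwn : ‖w‖ ≠ 0 := norm_ne_zero_iff.mpr hw0
  obtain ⟨w', hw'norm, hweq⟩ : ∃ w' : V, ‖w'‖ = 1 ∧ w = ‖w‖ • w' :=
    ⟨‖w‖⁻¹ • w, norm_smul_inv_norm hw0,
      by rw [smul_smul, mul_inv_cancel₀ hwn, one_smul]⟩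
  have hw' : ∀ j, ⟪e j, w'⟫ = 0 := by
    intro j
    have h := hw j
    rw [hweq, real_inner_smul_right] at h
    exact (mul_eq_zero.mp h).resolve_left hwn
  have hupd : ∀ v : V, ‖v‖ = 1 → (∀ j, ⟪e j, v⟫ = 0 ∨ j = i) →
      Orthonormal ℝ (Function.update e i v) := by
    intro v hv hvj
    rw [orthonormal_iff_ite] at he ⊢
    intro j k
    rcases eq_or_ne j i with hj | hj <;> rcases eq_or_ne k i with hk | hk
    · rw [hj, hk]; simp [real_inner_self_eq_norm_sq, hv]
    · rw [hj, Function.update_self, Function.update_of_ne hk, real_inner_comm,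
        (hvj k).resolve_right hk, if_neg (Ne.symm hk)]
    · rw [hk, Function.update_of_ne hj, Function.update_self,
        (hvj j).resolve_right hj, if_neg hj]
    · rw [Function.update_of_ne hj, Function.update_of_ne hk]; exact he j k
  set B := φ (Function.update e i w') with hB
  have key : ∀ a b : ℝ, a ^ 2 + b ^ 2 = 1 → a + b * B ≤ 1 := by
    intro a b hab
    have hvnorm : ‖a • e i + b • w'‖ = 1 := by
      have h2 : ‖a • e i + b • w'‖ ^ 2 = 1 := by
        rw [← real_inner_self_eq_norm_sq, real_inner_add_add_self,
          real_inner_smul_left, real_inner_smul_right,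
          real_inner_smul_left, real_inner_smul_right,
          real_inner_smul_left, real_inner_smul_right, hw' i,
          real_inner_self_eq_norm_sq, real_inner_self_eq_norm_sq, he.1 i, hw'norm]
        nlinarith
      nlinarith [norm_nonneg (a • e i + b • w')]
    have hvj : ∀ j, ⟪e j, a • e i + b • w'⟫ = 0 ∨ j = i := by
      intro j
      rcases eq_or_ne j i with hj | hj
      · right; exact hj
      · left
        rw [inner_add_right, real_inner_smul_right, real_inner_smul_right, hw' j]
        have h := (orthonormal_iff_ite.mp he) j i
        rw [if_neg hj] at h
        rw [h]
        ring
    have h1 := hcomass _ (hupd _ hvnorm hvj)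
    rwa [φ.map_update_add, φ.map_update_smul, φ.map_update_smul,
      Function.update_eq_self, hφe, ← hB, smul_eq_mul, smul_eq_mul, mul_one] at h1
  have hB0 : B = 0 := by
    set s := Real.sqrt (1 + B ^ 2) with hsdef
    have hs : (0:ℝ) < s := Real.sqrt_pos.mpr (by positivity)
    have hs2 : s ^ 2 = 1 + B ^ 2 := Real.sq_sqrt (by positivity)
    have h1 := key (1 / s) (B / s) (by field_simp; nlinarith)
    have h1' : 1 + B ^ 2 ≤ s := by
      have hc : 1 / s + B / s * B = (1 + B ^ 2) / s := by ring
      rw [hc, div_le_one hs] at h1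
      exact h1
    have hB2 : B ^ 2 = 0 := le_antisymm (by nlinarith) (sq_nonneg B)
    exact pow_eq_zero_iff (two_ne_zero) |>.mp hB2
  rw [hweq, φ.map_update_smul, ← hB, hB0, smul_zero]

private lemma key_calc (φ : V [⋀^Fin (q + 1)]→ₗ[ℝ] ℝ)
    (hcomass : ∀ e : Fin (q + 1) → V, Orthonormal ℝ e → φ e ≤ 1)
    (u : V) {e : Fin (q + 1) → V} (he : Orthonormal ℝ e) (hφe : φ e = 1) :
    ∑ i : Fin (q + 1), (-1 : ℝ) ^ (i : ℕ) * ⟪u, e i⟫ *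
      φ (Fin.cons u (Fin.removeNth i e)) = ∑ i : Fin (q + 1), ⟪u, e i⟫ ^ 2 := by
  classical
  set s : V := ∑ j : Fin (q + 1), ⟪u, e j⟫ • e j with hsdef
  set w : V := u - s with hwdef
  have hite := orthonormal_iff_ite.mp he
  have hw : ∀ j, ⟪e j, w⟫ = 0 := by
    intro j
    rw [hwdef, inner_sub_right, hsdef, inner_sum]
    simp only [real_inner_smul_right, hite, mul_ite, mul_one, mul_zero]
    rw [Finset.sum_ite_eq Finset.univ j fun k => ⟪u, e k⟫]
    simp [real_inner_comm]
  have cons_add : ∀ (r : Fin q → V) (x y : V),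
      φ (Fin.cons (x + y) r) = φ (Fin.cons x r) + φ (Fin.cons y r) := by
    intro r x y
    have h1 : Fin.cons (x + y) r = Function.update (Fin.cons x r : Fin (q+1) → V) 0 (x + y) :=
      by rw [Fin.update_cons_zero]
    rw [h1, φ.map_update_add, Fin.update_cons_zero, Fin.update_cons_zero]
  have cons_smul : ∀ (r : Fin q → V) (c : ℝ) (x : V),
      φ (Fin.cons (c • x) r) = c * φ (Fin.cons x r) := by
    intro r c x
    have h1 : Fin.cons (c • x) r = Function.update (Fin.cons x r : Fin (q+1) → V) 0 (c • x) :=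
      by rw [Fin.update_cons_zero]
    rw [h1, φ.map_update_smul, Fin.update_cons_zero, smul_eq_mul]
  have main : ∀ i : Fin (q + 1),
      φ (Fin.cons u (Fin.removeNth i e)) = ⟪u, e i⟫ * (-1 : ℝ) ^ (i : ℕ) := by
    intro i
    have hu' : u = s + w := by rw [hwdef]; abel
    have hsum : φ (Fin.cons s (Fin.removeNth i e)) =
        ∑ j : Fin (q + 1), ⟪u, e j⟫ * φ (Fin.cons (e j) (Fin.removeNth i e)) := by
      rw [hsdef]
      exact map_sum (IsLinearMap.mk' (fun x => φ (Fin.cons x (Fin.removeNth i e)))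
        ⟨cons_add _, cons_smul _⟩) _ _ |>.trans (by
          refine Finset.sum_congr rfl fun j _ => ?_
          exact cons_smul _ _ _)
    have hej : ∀ j, j ≠ i → φ (Fin.cons (e j) (Fin.removeNth i e)) = 0 := by
      intro j hj
      obtain ⟨k, hk⟩ := Fin.exists_succAbove_eq hj
      refine φ.map_eq_zero_of_eq _ (i := 0) (j := k.succ) ?_ (Fin.succ_ne_zero k).symm
      simp [Fin.removeNth, hk]
    have hei : φ (Fin.cons (e i) (Fin.removeNth i e)) = (-1 : ℝ) ^ (i : ℕ) := by
      rw [phi_cons_eq φ i, Fin.insertNth_self_removeNth, hφe, mul_one]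
    have hcw : φ (Fin.cons w (Fin.removeNth i e)) = 0 := by
      rw [phi_cons_eq φ i, Fin.insertNth_removeNth,
        first_variation φ hcomass he hφe hw i, mul_zero]
    conv_lhs => rw [hu', cons_add]
    rw [hsum, hcw, add_zero,
      Finset.sum_eq_single i (fun j _ hj => by rw [hej j hj, mul_zero]) (by simp), hei]
  refine Finset.sum_congr rfl fun i _ => ?_
  rw [main i]
  have hsq : (-1 : ℝ) ^ (i : ℕ) * (-1 : ℝ) ^ (i : ℕ) = 1 := by
    rw [← pow_add]; exact Even.neg_one_pow ⟨(i : ℕ), rfl⟩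
  linear_combination (⟪u, e i⟫ ^ 2) * hsq

end Aux

/-- **Corollary 5.17** (Harvey–Lawson).  For a unit vector `u`, the form
`φ_u = φ − u♭ ∧ (u ⌟ φ)` (the restriction of `φ` to the hyperplane `u⊥`) is nonnegative on
all `φ`-planes, and it vanishes on some `φ`-plane iff `u` lies in the span of some `φ`-plane
(i.e. `φ_u` lies on the boundary of the cone `Λ⁺(φ)`). -/
theorem restricted_form_boundary_iff
    {V : Type*} [NormedAddCommGroup V] [InnerProductSpace ℝ V]
    [FiniteDimensional ℝ V] {q : ℕ}
    (φ : V [⋀^Fin (q + 1)]→ₗ[ℝ] ℝ)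
    (hcomass : ∀ e : Fin (q + 1) → V, Orthonormal ℝ e → φ e ≤ 1)
    (u : V) (hu : ‖u‖ = 1)
    (φu : (Fin (q + 1) → V) → ℝ)
    (hφu : ∀ v : Fin (q + 1) → V, φu v =
      φ v - ∑ i : Fin (q + 1), (-1 : ℝ) ^ (i : ℕ) * ⟪u, v i⟫ *
        φ (Fin.cons u (Fin.removeNth i v))) :
    (∀ e : Fin (q + 1) → V, Orthonormal ℝ e → φ e = 1 → 0 ≤ φu e) ∧
    ((∃ e : Fin (q + 1) → V, Orthonormal ℝ e ∧ φ e = 1 ∧ φu e = 0) ↔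
      ∃ e : Fin (q + 1) → V, Orthonormal ℝ e ∧ φ e = 1 ∧
        u ∈ Submodule.span ℝ (Set.range e)) := by
  have huu : ⟪u, u⟫ = (1 : ℝ) := by rw [real_inner_self_eq_norm_sq, hu]; norm_num
  have hkey : ∀ e : Fin (q + 1) → V, Orthonormal ℝ e → φ e = 1 →
      φu e = 1 - ∑ i : Fin (q + 1), ⟪u, e i⟫ ^ 2 := by
    intro e he hφe
    rw [hφu, hφe, key_calc φ hcomass u he hφe]
  have hbessel : ∀ e : Fin (q + 1) → V, Orthonormal ℝ e →
      ∑ i : Fin (q + 1), ⟪u, e i⟫ ^ 2 ≤ 1 := by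
    intro e he
    have h := he.sum_inner_products_le (𝕜 := ℝ) u (s := Finset.univ)
    calc ∑ i : Fin (q + 1), ⟪u, e i⟫ ^ 2
        = ∑ i ∈ Finset.univ, ‖(⟪e i, u⟫ : ℝ)‖ ^ 2 := by
          refine Finset.sum_congr rfl fun i _ => ?_
          rw [real_inner_comm, Real.norm_eq_abs, sq_abs]
      _ ≤ ‖u‖ ^ 2 := h
      _ = 1 := by rw [hu]; norm_num
  refine ⟨?_, ?_, ?_⟩
  · intro e he hφe
    rw [hkey e he hφe]
    linarith [hbessel e he]
  · rintro ⟨e, he, hφe, h0⟩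
    refine ⟨e, he, hφe, ?_⟩
    have hk := hkey e he hφe
    rw [h0] at hk
    have hsum : ∑ i : Fin (q + 1), ⟪u, e i⟫ ^ 2 = 1 := by linarith
    have hite := orthonormal_iff_ite.mp he
    obtain ⟨s, hsdef⟩ : ∃ s : V, s = ∑ j : Fin (q + 1), ⟪u, e j⟫ • e j := ⟨_, rfl⟩
    have hejs : ∀ j, ⟪e j, s⟫ = ⟪u, e j⟫ := by
      intro j
      rw [hsdef, inner_sum]
      simp only [real_inner_smul_right, hite, mul_ite, mul_one, mul_zero]
      rw [Finset.sum_ite_eq Finset.univ j fun k => ⟪u, e k⟫]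
      simp
    have hus : ⟪u, s⟫ = ∑ j : Fin (q + 1), ⟪u, e j⟫ ^ 2 := by
      rw [hsdef, inner_sum]
      refine Finset.sum_congr rfl fun j _ => ?_
      rw [real_inner_smul_right]; ring
    have hss : ⟪s, s⟫ = ∑ j : Fin (q + 1), ⟪u, e j⟫ ^ 2 := by
      conv_lhs => rw [hsdef, sum_inner]
      refine Finset.sum_congr rfl fun j _ => ?_
      rw [real_inner_smul_left, ← hsdef, hejs j]; ring
    have hws : ⟪u - s, u - s⟫ = (0 : ℝ) := by
      rw [real_inner_sub_sub_self, huu, hus, hss, hsum]; ring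
    have hu_eq : u = s := by
      have h := inner_self_eq_zero.mp hws
      rwa [sub_eq_zero] at h
    rw [hu_eq, hsdef]
    exact Submodule.sum_mem _ fun j _ =>
      Submodule.smul_mem _ _ (Submodule.subset_span ⟨j, rfl⟩)
  · rintro ⟨e, he, hφe, hmem⟩
    refine ⟨e, he, hφe, ?_⟩
    rw [hkey e he hφe]
    rw [Submodule.mem_span_range_iff_exists_fun] at hmem
    obtain ⟨a, ha⟩ := hmem
    have hite := orthonormal_iff_ite.mp he
    have haeq : ∀ i, ⟪u, e i⟫ = a i := by
      intro i
      rw [← ha, sum_inner]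
      simp only [real_inner_smul_left, hite, mul_ite, mul_one, mul_zero]
      rw [Finset.sum_ite_eq' Finset.univ i a]
      simp
    have h1 : ∑ i : Fin (q + 1), ⟪u, e i⟫ ^ 2 = 1 := by
      calc ∑ i : Fin (q + 1), ⟪u, e i⟫ ^ 2
          = ∑ i : Fin (q + 1), ⟪u, a i • e i⟫ := by
            refine Finset.sum_congr rfl fun i _ => ?_
            rw [real_inner_smul_right, haeq i]; ring
        _ = ⟪u, ∑ i : Fin (q + 1), a i • e i⟫ := (inner_sum _ _ _).symm
        _ = 1 := by rw [ha]; exact huu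
    rw [h1]; ring
end

section
/- Let V be a finite-dimensional real inner product space, p ≥ 1, let φ be an alternating p-form on V of comass at most one, let U ⊆ V be open, and let K ⊆ U be compact with (U,φ)-convex hull K̂. Then for x ∈ U: x ∉ K̂ if and only if there exists a smooth φ-plurisubharmonic function f : U → ℝ with f ≥ 0 on U, f identically zero on some neighborhood of K, and f(x) > 0. Furthermore, if there exists a smooth φ-plurisubharmonic function on U which is strictly φ-plurisubharmonic at x, then f can in addition be chosen strictly φ-plurisubharmonic at x. -/
open scoped RealInnerProductSpace

/-- `f` is strictly `φ`-plurisubharmonic at `x`: the trace of its Hessian on every `φ`-plane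
is positive at `x`. -/
def StrictAt {V : Type*} [NormedAddCommGroup V] [InnerProductSpace ℝ V]
    {p : ℕ} (φ : V [⋀^Fin p]→ₗ[ℝ] ℝ) (f : V → ℝ) (x : V) : Prop :=
  ∀ e : Fin p → V, Orthonormal ℝ e → φ e = 1 →
    0 < ∑ j, fderiv ℝ (fderiv ℝ f) x (e j) (e j)

/-- The `(U,φ)`-convex hull of a compact subset `K` of `U`. -/
def PshHull {V : Type*} [NormedAddCommGroup V] [InnerProductSpace ℝ V]
    {p : ℕ} (φ : V [⋀^Fin p]→ₗ[ℝ] ℝ) (U : Set V) (K : Set V) : Set V :=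
  {x ∈ U | ∀ f : V → ℝ, PshOn φ U f → f x ≤ sSup (f '' K)}

namespace HL32aux

open scoped ContDiff
open Real

/-! ### A smooth convex nondecreasing cutoff -/

/-- Smooth convex nondecreasing cutoff: zero on `(-∞,0]`, positive on `(0,∞)`. -/
noncomputable def chi (t : ℝ) : ℝ := ∫ s in (0:ℝ)..t, expNegInvGlue s

lemma T_mono : Monotone expNegInvGlue := by
  intro a b hab
  rcases le_or_gt b 0 with hb | hb
  · rw [expNegInvGlue.zero_of_nonpos (hab.trans hb), expNegInvGlue.zero_of_nonpos hb]
  rcases le_or_gt a 0 with ha | ha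
  · rw [expNegInvGlue.zero_of_nonpos ha]; exact expNegInvGlue.nonneg b
  · simp only [expNegInvGlue, not_le.2 ha, not_le.2 hb, if_false]
    exact Real.exp_le_exp.2 (neg_le_neg (inv_anti₀ ha hab))

lemma deriv_T_nonneg (t : ℝ) : 0 ≤ deriv expNegInvGlue t := by
  have hd : HasDerivAt expNegInvGlue (deriv expNegInvGlue t) t :=
    ((expNegInvGlue.contDiff (n := 1)).differentiable (by simp) t).hasDerivAt
  rw [hasDerivAt_iff_tendsto_slope] at hd
  have hd' : Filter.Tendsto (slope expNegInvGlue t) (nhdsWithin t (Set.Ioi t))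
      (nhds (deriv expNegInvGlue t)) :=
    hd.mono_left (nhdsWithin_mono t fun y hy => ne_of_gt hy)
  refine ge_of_tendsto hd' ?_
  filter_upwards [eventually_mem_nhdsWithin] with y hy
  have h1 : (0:ℝ) ≤ expNegInvGlue y - expNegInvGlue t := sub_nonneg.2 (T_mono (le_of_lt hy))
  have hyt : (0:ℝ) < y - t := sub_pos.2 hy
  simpa [slope_def_field, div_eq_mul_inv] using div_nonneg h1 hyt.le

lemma chi_hasDerivAt (t : ℝ) : HasDerivAt chi (expNegInvGlue t) t :=
  ((expNegInvGlue.contDiff (n := 0)).continuous.integral_hasStrictDerivAt 0 t).hasDerivAt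

lemma deriv_chi : deriv chi = expNegInvGlue := funext fun t => (chi_hasDerivAt t).deriv

lemma chi_contDiff : ContDiff ℝ ∞ chi :=
  contDiff_infty_iff_deriv.mpr ⟨fun t => (chi_hasDerivAt t).differentiableAt,
    deriv_chi ▸ expNegInvGlue.contDiff (n := ⊤)⟩

lemma deriv_chi_nonneg (t : ℝ) : 0 ≤ deriv chi t := by
  rw [deriv_chi]; exact expNegInvGlue.nonneg t

lemma deriv_chi_pos {t : ℝ} (ht : 0 < t) : 0 < deriv chi t := by
  rw [deriv_chi]; exact expNegInvGlue.pos_of_pos ht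

lemma deriv2_chi_nonneg (t : ℝ) : 0 ≤ deriv (deriv chi) t := by
  rw [deriv_chi]; exact deriv_T_nonneg t

lemma chi_zero_of_nonpos {t : ℝ} (ht : t ≤ 0) : chi t = 0 := by
  have h : Set.EqOn expNegInvGlue (fun _ => (0:ℝ)) (Set.uIcc 0 t) := by
    intro s hs
    rw [Set.uIcc_of_ge ht] at hs
    exact expNegInvGlue.zero_of_nonpos hs.2
  rw [chi, intervalIntegral.integral_congr h, intervalIntegral.integral_zero]

lemma chi_pos_of_pos {t : ℝ} (ht : 0 < t) : 0 < chi t := by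
  have hmono : StrictMonoOn chi (Set.Ici 0) := by
    refine strictMonoOn_of_deriv_pos (convex_Ici 0)
      (fun y _ => ((chi_hasDerivAt y).differentiableAt.continuousAt).continuousWithinAt) ?_
    intro y hy
    rw [interior_Ici] at hy
    exact deriv_chi_pos hy
  have h0 : chi 0 = 0 := chi_zero_of_nonpos le_rfl
  have := hmono Set.self_mem_Ici (Set.mem_Ici.2 ht.le) ht
  linarith

lemma chi_nonneg (t : ℝ) : 0 ≤ chi t := by
  rcases le_or_gt t 0 with h | h
  · rw [chi_zero_of_nonpos h]
  · exact (chi_pos_of_pos h).le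

/-! ### Second-derivative chain rules -/

section Hess

variable {V : Type*} [NormedAddCommGroup V] [NormedSpace ℝ V]

lemma one_le_inf : (1 : WithTop ℕ∞) ≤ ∞ := by exact_mod_cast le_top
lemma inf_add_one : (∞ : WithTop ℕ∞) + 1 ≤ ∞ := by simp

lemma hess_comp (χ : ℝ → ℝ) (hχ : ContDiff ℝ ∞ χ) {U : Set V} (hU : IsOpen U)
    {g : V → ℝ} (hg : ContDiffOn ℝ ∞ g U) {x : V} (hx : x ∈ U) (v : V) :
    fderiv ℝ (fderiv ℝ (fun y => χ (g y))) x v v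
      = deriv (deriv χ) (g x) * (fderiv ℝ g x v * fderiv ℝ g x v)
        + deriv χ (g x) * fderiv ℝ (fderiv ℝ g) x v v := by
  have hχd : Differentiable ℝ χ := hχ.differentiable (by simp)
  have hχ' : ContDiff ℝ ∞ (deriv χ) := (contDiff_infty_iff_deriv.mp hχ).2
  have hgd : ∀ y ∈ U, DifferentiableAt ℝ g y := fun y hy =>
    (hg.contDiffAt (hU.mem_nhds hy)).differentiableAt (by simp)
  have hkey : ∀ y ∈ U, fderiv ℝ (fun z => χ (g z)) y = deriv χ (g y) • fderiv ℝ g y :=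
    fun y hy =>
      (HasDerivAt.comp_hasFDerivAt y (hχd (g y)).hasDerivAt (hgd y hy).hasFDerivAt).fderiv
  have hev : fderiv ℝ (fun z => χ (g z)) =ᶠ[nhds x] fun y => deriv χ (g y) • fderiv ℝ g y :=
    Filter.eventuallyEq_of_mem (hU.mem_nhds hx) hkey
  have hc : HasFDerivAt (fun y => deriv χ (g y)) ((deriv (deriv χ) (g x)) • fderiv ℝ g x) x :=
    HasDerivAt.comp_hasFDerivAt x ((hχ'.differentiable (by simp)) (g x)).hasDerivAt
      (hgd x hx).hasFDerivAt
  have hG : HasFDerivAt (fderiv ℝ g) (fderiv ℝ (fderiv ℝ g) x) x :=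
    (((hg.contDiffAt (hU.mem_nhds hx)).fderiv_right inf_add_one).differentiableAt
      (by simp)).hasFDerivAt
  have hs := hc.smul hG
  rw [hev.fderiv_eq, HasFDerivAt.fderiv (f := fun y => deriv χ (g y) • fderiv ℝ g y) hs]
  simp only [ContinuousLinearMap.add_apply, ContinuousLinearMap.smul_apply,
    ContinuousLinearMap.smulRight_apply, smul_eq_mul]
  ring

lemma fderiv_shift (g : V → ℝ) (c : ℝ) : fderiv ℝ (fun y => g y - c) = fderiv ℝ g :=
  funext fun _ => fderiv_sub_const c

lemma hess_chi_comp {U : Set V} (hU : IsOpen U) {g : V → ℝ}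
    (hg : ContDiffOn ℝ ∞ g U) (c : ℝ) {x : V} (hx : x ∈ U) (v : V) :
    fderiv ℝ (fderiv ℝ (fun y => chi (g y - c))) x v v
      = deriv (deriv chi) (g x - c) * (fderiv ℝ g x v * fderiv ℝ g x v)
        + deriv chi (g x - c) * fderiv ℝ (fderiv ℝ g) x v v := by
  have h := hess_comp (V := V) chi chi_contDiff hU (g := fun y => g y - c)
    (hg.sub contDiffOn_const) hx v
  rw [fderiv_shift g c] at h
  exact h

lemma hess_add_smul {U : Set V} (hU : IsOpen U) {g h : V → ℝ}
    (hg : ContDiffOn ℝ ∞ g U) (hh : ContDiffOn ℝ ∞ h U) (ε : ℝ) {x : V} (hx : x ∈ U) (v : V) :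
    fderiv ℝ (fderiv ℝ (fun y => g y + ε * h y)) x v v
      = fderiv ℝ (fderiv ℝ g) x v v + ε * fderiv ℝ (fderiv ℝ h) x v v := by
  have hgd : ∀ y ∈ U, DifferentiableAt ℝ g y := fun y hy =>
    (hg.contDiffAt (hU.mem_nhds hy)).differentiableAt (by simp)
  have hhd : ∀ y ∈ U, DifferentiableAt ℝ h y := fun y hy =>
    (hh.contDiffAt (hU.mem_nhds hy)).differentiableAt (by simp)
  have hkey : ∀ y ∈ U, fderiv ℝ (fun z => g z + ε * h z) y
      = fderiv ℝ g y + ε • fderiv ℝ h y := fun y hy =>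
    ((hgd y hy).hasFDerivAt.add (((hhd y hy).hasFDerivAt).const_mul ε)).fderiv
  have hev : fderiv ℝ (fun z => g z + ε * h z) =ᶠ[nhds x]
      fun y => fderiv ℝ g y + ε • fderiv ℝ h y :=
    Filter.eventuallyEq_of_mem (hU.mem_nhds hx) hkey
  have hG : HasFDerivAt (fderiv ℝ g) (fderiv ℝ (fderiv ℝ g) x) x :=
    (((hg.contDiffAt (hU.mem_nhds hx)).fderiv_right inf_add_one).differentiableAt
      (by simp)).hasFDerivAt
  have hH : HasFDerivAt (fderiv ℝ h) (fderiv ℝ (fderiv ℝ h) x) x :=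
    (((hh.contDiffAt (hU.mem_nhds hx)).fderiv_right inf_add_one).differentiableAt
      (by simp)).hasFDerivAt
  have hs := hG.add (hH.const_smul ε)
  rw [hev.fderiv_eq, HasFDerivAt.fderiv (f := fun y => fderiv ℝ g y + ε • fderiv ℝ h y) hs]
  simp

end Hess

/-! ### Plurisubharmonic consequences -/

section Psh

variable {V : Type*} [NormedAddCommGroup V] [InnerProductSpace ℝ V]
  {p : ℕ} (φ : V [⋀^Fin p]→ₗ[ℝ] ℝ)

lemma trace_chi_comp {U : Set V} (hU : IsOpen U) {g : V → ℝ}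
    (hg : ContDiffOn ℝ ∞ g U) (c : ℝ) {x : V} (hx : x ∈ U) (e : Fin p → V) :
    ∑ j, fderiv ℝ (fderiv ℝ (fun y => chi (g y - c))) x (e j) (e j)
      = deriv (deriv chi) (g x - c) * ∑ j, (fderiv ℝ g x (e j) * fderiv ℝ g x (e j))
        + deriv chi (g x - c) * ∑ j, fderiv ℝ (fderiv ℝ g) x (e j) (e j) := by
  rw [Finset.mul_sum, Finset.mul_sum, ← Finset.sum_add_distrib]
  exact Finset.sum_congr rfl fun j _ => hess_chi_comp hU hg c hx (e j)

lemma trace_add_smul {U : Set V} (hU : IsOpen U) {g h : V → ℝ}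
    (hg : ContDiffOn ℝ ∞ g U) (hh : ContDiffOn ℝ ∞ h U) (ε : ℝ) {x : V} (hx : x ∈ U)
    (e : Fin p → V) :
    ∑ j, fderiv ℝ (fderiv ℝ (fun y => g y + ε * h y)) x (e j) (e j)
      = ∑ j, fderiv ℝ (fderiv ℝ g) x (e j) (e j)
        + ε * ∑ j, fderiv ℝ (fderiv ℝ h) x (e j) (e j) := by
  rw [Finset.mul_sum, ← Finset.sum_add_distrib]
  exact Finset.sum_congr rfl fun j _ => hess_add_smul hU hg hh ε hx (e j)

lemma separating {U : Set V} (hU : IsOpen U) {K : Set V} (hKU : K ⊆ U)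
    {g : V → ℝ} (hg : PshOn φ U g) {c : ℝ} (hKc : ∀ y ∈ K, g y < c)
    {x : V} (hx : x ∈ U) (hcx : c < g x) :
    ∃ f : V → ℝ, PshOn φ U f ∧ (∀ y ∈ U, 0 ≤ f y) ∧
      (∃ W : Set V, IsOpen W ∧ K ⊆ W ∧ ∀ y ∈ W ∩ U, f y = 0) ∧ 0 < f x ∧
      (StrictAt φ g x → StrictAt φ f x) := by
  refine ⟨fun y => chi (g y - c), ⟨?_, ?_⟩, ?_, ?_, ?_, ?_⟩
  · exact chi_contDiff.comp_contDiffOn (hg.1.sub contDiffOn_const)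
  · intro y hy e he hφ
    rw [trace_chi_comp hU hg.1 c hy e]
    exact add_nonneg
      (mul_nonneg (deriv2_chi_nonneg _)
        (Finset.sum_nonneg fun j _ => mul_self_nonneg _))
      (mul_nonneg (deriv_chi_nonneg _) (hg.2 y hy e he hφ))
  · exact fun y _ => chi_nonneg _
  · refine ⟨U ∩ g ⁻¹' Set.Iio c, hg.1.continuousOn.isOpen_inter_preimage hU isOpen_Iio,
      fun y hy => ⟨hKU hy, hKc y hy⟩, ?_⟩
    rintro y ⟨⟨-, hlt⟩, -⟩
    exact chi_zero_of_nonpos (sub_nonpos.2 (le_of_lt hlt))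
  · exact chi_pos_of_pos (sub_pos.2 hcx)
  · intro hs e he hφ
    rw [trace_chi_comp hU hg.1 c hx e]
    exact add_pos_of_nonneg_of_pos
      (mul_nonneg (deriv2_chi_nonneg _)
        (Finset.sum_nonneg fun j _ => mul_self_nonneg _))
      (mul_pos (deriv_chi_pos (sub_pos.2 hcx)) (hs e he hφ))

lemma pshOn_add_smul {U : Set V} (hU : IsOpen U) {g h : V → ℝ}
    (hg : PshOn φ U g) (hh : PshOn φ U h) {ε : ℝ} (hε : 0 ≤ ε) :
    PshOn φ U (fun y => g y + ε * h y) := by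
  refine ⟨hg.1.add (contDiffOn_const.mul hh.1), ?_⟩
  intro y hy e he hφ
  rw [trace_add_smul hU hg.1 hh.1 ε hy e]
  exact add_nonneg (hg.2 y hy e he hφ) (mul_nonneg hε (hh.2 y hy e he hφ))

end Psh

end HL32aux

open HL32aux in
/-- **Lemma 3.2** (Harvey–Lawson), Euclidean parallel case.  `x ∉ K̂` iff there is a
nonnegative smooth `φ`-plurisubharmonic function on `U` vanishing identically on a
neighborhood of `K` and positive at `x`; and if some `φ`-plurisubharmonic function on `U`
is strict at `x`, then `f` may in addition be chosen strict at `x`. -/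
theorem notMem_hull_iff_separating_psh
    {V : Type*} [NormedAddCommGroup V] [InnerProductSpace ℝ V]
    [FiniteDimensional ℝ V] {p : ℕ} (hp : 1 ≤ p)
    (φ : V [⋀^Fin p]→ₗ[ℝ] ℝ)
    (hcomass : ∀ u : Fin p → V, Orthonormal ℝ u → φ u ≤ 1)
    (U : Set V) (hU : IsOpen U) (K : Set V) (hK : IsCompact K) (hKU : K ⊆ U)
    (x : V) (hx : x ∈ U) :
    (x ∉ PshHull φ U K ↔
      ∃ f : V → ℝ, PshOn φ U f ∧ (∀ y ∈ U, 0 ≤ f y) ∧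
        (∃ W : Set V, IsOpen W ∧ K ⊆ W ∧ ∀ y ∈ W ∩ U, f y = 0) ∧ 0 < f x) ∧
    ((∃ h : V → ℝ, PshOn φ U h ∧ StrictAt φ h x) → x ∉ PshHull φ U K →
      ∃ f : V → ℝ, PshOn φ U f ∧ (∀ y ∈ U, 0 ≤ f y) ∧
        (∃ W : Set V, IsOpen W ∧ K ⊆ W ∧ ∀ y ∈ W ∩ U, f y = 0) ∧ 0 < f x ∧
        StrictAt φ f x) := by
  have hmem : ∀ z : V, z ∈ PshHull φ U K ↔
      z ∈ U ∧ ∀ f : V → ℝ, PshOn φ U f → f z ≤ sSup (f '' K) := fun z => Iff.rfl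
  -- from `x ∉ hull` extract a separating psh function
  have hsep : x ∉ PshHull φ U K →
      ∃ g : V → ℝ, PshOn φ U g ∧ sSup (g '' K) < g x := by
    intro hnot
    rw [hmem, not_and] at hnot
    have := hnot hx
    push_neg at this
    exact this
  constructor
  · constructor
    · -- forward direction
      intro hnot
      obtain ⟨g, hg, hgx⟩ := hsep hnot
      have hbdd : BddAbove (g '' K) :=
        (hK.image_of_continuousOn (hg.1.continuousOn.mono hKU)).bddAbove
      have hKc : ∀ y ∈ K, g y < (sSup (g '' K) + g x) / 2 := by
        intro y hy
        have : g y ≤ sSup (g '' K) := le_csSup hbdd (Set.mem_image_of_mem g hy)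
        linarith
      have hcx : (sSup (g '' K) + g x) / 2 < g x := by linarith
      obtain ⟨f, h1, h2, h3, h4, -⟩ := separating φ hU hKU hg hKc hx hcx
      exact ⟨f, h1, h2, h3, h4⟩
    · -- reverse direction
      rintro ⟨f, hf, hf0, ⟨W, hW, hKW, hWz⟩, hfx⟩ hmem'
      have hle := ((hmem x).mp hmem').2 f hf
      have hsup : sSup (f '' K) = 0 := by
        rcases (f '' K).eq_empty_or_nonempty with h | h
        · rw [h]; exact Real.sSup_empty
        · have hsub : f '' K ⊆ {0} := by
            rintro - ⟨y, hy, rfl⟩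
            exact hWz y ⟨hKW hy, hKU hy⟩
          have heq : f '' K = {0} :=
            (Set.subset_singleton_iff_eq.mp hsub).resolve_left h.ne_empty
          rw [heq, csSup_singleton]
      rw [hsup] at hle
      linarith
  · -- strict part
    rintro ⟨h, hh, hhs⟩ hnot
    obtain ⟨g, hg, hgx⟩ := hsep hnot
    have hbdd : BddAbove (g '' K) :=
      (hK.image_of_continuousOn (hg.1.continuousOn.mono hKU)).bddAbove
    obtain ⟨C, hC⟩ := hK.exists_bound_of_continuousOn (hh.1.continuousOn.mono hKU)
    set C' : ℝ := max C 0 with hC'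
    have hC'0 : 0 ≤ C' := le_max_right C 0
    set s : ℝ := sSup (g '' K) with hs
    set δ : ℝ := g x - s with hδdef
    have hδ : 0 < δ := by simp only [hδdef]; linarith
    set D : ℝ := |h x| + C' + 1 with hD
    have hDpos : 0 < D := by positivity
    set ε : ℝ := δ / (2 * D) with hε
    have hεpos : 0 < ε := by positivity
    have hεD : ε * D = δ / 2 := by
      field_simp [hε]
      rw [hε]; field_simp [hDpos.ne']
    -- the perturbed function
    set gε : V → ℝ := fun y => g y + ε * h y with hgε
    have hgεpsh : PshOn φ U gε := pshOn_add_smul φ hU hg hh hεpos.le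
    have hgεs : StrictAt φ gε x := by
      intro e he hφ
      rw [hgε]
      rw [trace_add_smul hU hg.1 hh.1 ε hx e]
      exact add_pos_of_nonneg_of_pos (hg.2 x hx e he hφ)
        (mul_pos hεpos (hhs e he hφ))
    -- bounds
    set c : ℝ := s + ε * C' + δ / 4 with hc
    have hKc : ∀ y ∈ K, gε y < c := by
      intro y hy
      have h1 : g y ≤ s := le_csSup hbdd (Set.mem_image_of_mem g hy)
      have h2 : h y ≤ C' := by
        have := hC y hy
        rw [Real.norm_eq_abs] at this
        calc h y ≤ |h y| := le_abs_self _
        _ ≤ C := this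
        _ ≤ C' := le_max_left C 0
      have h3 : ε * h y ≤ ε * C' := mul_le_mul_of_nonneg_left h2 hεpos.le
      have : gε y = g y + ε * h y := rfl
      rw [this, hc]
      linarith
    have hcx : c < gε x := by
      have ha1 : |h x| + C' ≤ D := by rw [hD]; linarith
      have ha2 : ε * (|h x| + C') ≤ ε * D := mul_le_mul_of_nonneg_left ha1 hεpos.le
      have ha3 : ε * (-|h x|) ≤ ε * h x :=
        mul_le_mul_of_nonneg_left (neg_abs_le (h x)) hεpos.le
      have hgxval : g x = s + δ := by rw [hδdef]; ring
      have : gε x = g x + ε * h x := rfl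
      rw [this, hc, hgxval]
      have hexp : ε * (|h x| + C') = ε * |h x| + ε * C' := by ring
      have hexp2 : ε * (-|h x|) = -(ε * |h x|) := by ring
      rw [hexp] at ha2
      rw [hexp2] at ha3
      linarith [hεD]
    obtain ⟨f, h1, h2, h3, h4, h5⟩ := separating φ hU hKU hgεpsh hKc hx hcx
    exact ⟨f, h1, h2, h3, h4, h5 hgεs⟩
end

section
/- Let V be a finite-dimensional real inner product space, p ≥ 1, let φ be an alternating p-form on V of comass at most one, and let U ⊆ V be open. Then the following are equivalent: (1) for every compact set K ⊆ U, the (U,φ)-convex hull K̂ is compact; (2) there exists a smooth φ-plurisubharmonic proper exhaustion function f : U → ℝ, i.e. a smooth φ-plurisubharmonic f with {x ∈ U : f(x) ≤ c} compact for every c ∈ ℝ. (U is then called φ-convex.) -/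
open scoped RealInnerProductSpace

section Aux
variable {V : Type*} [NormedAddCommGroup V] [InnerProductSpace ℝ V]
  {p : ℕ} {φ : V [⋀^Fin p]→ₗ[ℝ] ℝ} {U : Set V} (hU : IsOpen U)

include hU

omit hU in
lemma fderiv2_congr {f g : V → ℝ} {x : V} (h : f =ᶠ[nhds x] g) :
    fderiv ℝ (fderiv ℝ f) x = fderiv ℝ (fderiv ℝ g) x :=
  (h.fderiv).fderiv_eq

lemma diffAt_of_contDiffOn {f : V → ℝ} (hf : ContDiffOn ℝ (⊤ : ℕ∞) f U)
    {x : V} (hx : x ∈ U) :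
    DifferentiableAt ℝ f x ∧ DifferentiableAt ℝ (fderiv ℝ f) x := by
  have hA : ContDiffAt ℝ (⊤ : ℕ∞) f x := hf.contDiffAt (hU.mem_nhds hx)
  have hle : (1 : WithTop ℕ∞) ≤ ((⊤ : ℕ∞) : WithTop ℕ∞) := by
    exact_mod_cast le_top
  refine ⟨hA.differentiableAt (by simp), ?_⟩
  have : ContDiffAt ℝ (⊤ : ℕ∞) (fderiv ℝ f) x := by
    apply hA.fderiv_right
    simp
  exact this.differentiableAt (by simp)

lemma PshOn.continuousAt {f : V → ℝ} (hf : PshOn φ U f) {x : V} (hx : x ∈ U) :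
    ContinuousAt f x :=
  ((hf.1.contDiffAt (hU.mem_nhds hx)).continuousAt)

omit hU in
lemma pshOn_zero : PshOn φ U (fun _ => (0 : ℝ)) := by
  refine ⟨contDiffOn_const, fun x hx e he hφ => ?_⟩
  have h1 : fderiv ℝ (fun _ : V => (0:ℝ)) = fun _ => 0 := by
    funext y; exact fderiv_const_apply 0
  rw [h1]
  have h2 : fderiv ℝ (fun _ : V => (0 : V →L[ℝ] ℝ)) x = 0 := fderiv_const_apply 0
  rw [h2]
  simp

lemma PshOn.add {f g : V → ℝ} (hf : PshOn φ U f) (hg : PshOn φ U g) :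
    PshOn φ U (fun x => f x + g x) := by
  refine ⟨hf.1.add hg.1, fun x hx e he hφ => ?_⟩
  have hfx := diffAt_of_contDiffOn hU hf.1 hx
  have hgx := diffAt_of_contDiffOn hU hg.1 hx
  have h1 : fderiv ℝ (fderiv ℝ fun y => f y + g y) x
      = fderiv ℝ (fun y => fderiv ℝ f y + fderiv ℝ g y) x := by
    apply Filter.EventuallyEq.fderiv_eq
    filter_upwards [hU.mem_nhds hx] with y hy
    exact fderiv_add (diffAt_of_contDiffOn hU hf.1 hy).1 (diffAt_of_contDiffOn hU hg.1 hy).1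
  have h2 : fderiv ℝ (fun y => fderiv ℝ f y + fderiv ℝ g y) x
      = fderiv ℝ (fderiv ℝ f) x + fderiv ℝ (fderiv ℝ g) x :=
    fderiv_add hfx.2 hgx.2
  rw [h1, h2]
  simp only [ContinuousLinearMap.add_apply]
  rw [Finset.sum_add_distrib]
  exact add_nonneg (hf.2 x hx e he hφ) (hg.2 x hx e he hφ)

lemma PshOn.const_smul {f : V → ℝ} (hf : PshOn φ U f) {c : ℝ} (hc : 0 ≤ c) :
    PshOn φ U (fun x => c * f x) := by
  refine ⟨hf.1.const_smul c, fun x hx e he hφ => ?_⟩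
  have h1 : fderiv ℝ (fderiv ℝ fun y => c * f y) x
      = fderiv ℝ (fun y => c • fderiv ℝ f y) x := by
    apply Filter.EventuallyEq.fderiv_eq
    filter_upwards [hU.mem_nhds hx] with y hy
    have : fderiv ℝ (fun y => c * f y) y = c • fderiv ℝ f y := by
      have := fderiv_fun_const_smul (𝕜 := ℝ) (diffAt_of_contDiffOn hU hf.1 hy).1 c
      simpa [smul_eq_mul] using this
    exact this
  have h2 : fderiv ℝ (fun y => c • fderiv ℝ f y) x = c • fderiv ℝ (fderiv ℝ f) x :=
    fderiv_const_smul (diffAt_of_contDiffOn hU hf.1 hx).2 c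
  rw [h1, h2]
  simp only [ContinuousLinearMap.coe_smul', Pi.smul_apply, smul_eq_mul]
  rw [← Finset.mul_sum]
  exact mul_nonneg hc (hf.2 x hx e he hφ)

omit hU in
lemma PshOn.sub_const {f : V → ℝ} (hf : PshOn φ U f) (c : ℝ) :
    PshOn φ U (fun x => f x - c) := by
  refine ⟨hf.1.sub contDiffOn_const, fun x hx e he hφ => ?_⟩
  have h1 : fderiv ℝ (fun y => f y - c) = fderiv ℝ f := by
    funext y
    exact fderiv_sub_const c
  rw [h1]
  exact hf.2 x hx e he hφ

lemma pshOn_sum {ι : Type*} (s : Finset ι) (F : ι → V → ℝ)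
    (h : ∀ i ∈ s, PshOn φ U (F i)) : PshOn φ U (fun x => ∑ i ∈ s, F i x) := by
  classical
  revert h
  refine Finset.induction_on s (fun _ => by simpa using (pshOn_zero (φ := φ) (U := U))) ?_
  intro a t hni ih h
  simp only [Finset.sum_insert hni]
  exact (h a (Finset.mem_insert_self a t)).add hU
    (ih fun i hi => h i (Finset.mem_insert_of_mem hi))


lemma PshOn.comp {f : V → ℝ} (hf : PshOn φ U f) {ψ : ℝ → ℝ}
    (hψ : ContDiff ℝ (⊤ : ℕ∞) ψ) (hψ' : ∀ t, 0 ≤ deriv ψ t)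
    (hψ'' : ∀ t, 0 ≤ deriv (deriv ψ) t) :
    PshOn φ U (fun x => ψ (f x)) := by
  have hle : (1 : WithTop ℕ∞) ≤ ((⊤ : ℕ∞) : WithTop ℕ∞) := by exact_mod_cast le_top
  have hψd : ContDiff ℝ (⊤ : ℕ∞) (deriv ψ) := by
    exact_mod_cast (contDiff_infty_iff_deriv.1 (by exact_mod_cast hψ)).2
  refine ⟨hψ.comp_contDiffOn hf.1, fun x hx e he hφe => ?_⟩
  set L := fderiv ℝ f with hLdef
  set c : V → ℝ := fun y => deriv ψ (f y) with hcdef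
  have hstep1 : ∀ y ∈ U, fderiv ℝ (fun z => ψ (f z)) y = c y • L y := by
    intro y hy
    have hdψ : HasDerivAt ψ (deriv ψ (f y)) (f y) :=
      ((hψ.differentiable (by simp)) (f y)).hasDerivAt
    have hdf : HasFDerivAt f (L y) y := (diffAt_of_contDiffOn hU hf.1 hy).1.hasFDerivAt
    exact (hdψ.comp_hasFDerivAt y hdf).fderiv
  have hcx : DifferentiableAt ℝ c x :=
    ((hψd.differentiable (by simp)) (f x)).comp x (diffAt_of_contDiffOn hU hf.1 hx).1
  have h1' : fderiv ℝ (fderiv ℝ (fun z => ψ (f z))) x = fderiv ℝ (fun y => c y • L y) x := by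
    apply Filter.EventuallyEq.fderiv_eq
    filter_upwards [hU.mem_nhds hx] with y hy using hstep1 y hy
  have h2' : fderiv ℝ (fun y => c y • L y) x
      = c x • fderiv ℝ L x + (fderiv ℝ c x).smulRight (L x) :=
    fderiv_smul hcx (diffAt_of_contDiffOn hU hf.1 hx).2
  have hc' : fderiv ℝ c x = deriv (deriv ψ) (f x) • L x := by
    have hdψ : HasDerivAt (deriv ψ) (deriv (deriv ψ) (f x)) (f x) :=
      ((hψd.differentiable (by simp)) (f x)).hasDerivAt
    have hdf : HasFDerivAt f (L x) x := (diffAt_of_contDiffOn hU hf.1 hx).1.hasFDerivAt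
    exact (hdψ.comp_hasFDerivAt x hdf).fderiv
  rw [h1', h2', hc']
  simp only [ContinuousLinearMap.add_apply, ContinuousLinearMap.coe_smul', Pi.smul_apply,
    ContinuousLinearMap.smulRight_apply, smul_eq_mul]
  rw [Finset.sum_add_distrib]
  apply add_nonneg
  · rw [← Finset.mul_sum]
    exact mul_nonneg (hψ' (f x)) (hf.2 x hx e he hφe)
  · apply Finset.sum_nonneg
    intro j _
    have : deriv (deriv ψ) (f x) * L x (e j) * L x (e j)
        = deriv (deriv ψ) (f x) * (L x (e j) * L x (e j)) := by ring
    rw [this]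
    exact mul_nonneg (hψ'' (f x)) (mul_self_nonneg _)

end Aux

section Glue

open intervalIntegral

lemma primitive_facts {h : ℝ → ℝ} (hh : ContDiff ℝ (⊤ : ℕ∞) h) (a : ℝ) :
    ContDiff ℝ (⊤ : ℕ∞) (fun t => ∫ s in a..t, h s) ∧
      deriv (fun t => ∫ s in a..t, h s) = h := by
  have hc : Continuous h := hh.continuous
  have hd : deriv (fun t => ∫ s in a..t, h s) = h :=
    funext fun b => Continuous.deriv_integral h hc a b
  have hdiff : Differentiable ℝ (fun t => ∫ s in a..t, h s) := fun b =>
    ((hc.integral_hasStrictDerivAt a b).hasDerivAt).differentiableAt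
  refine ⟨?_, hd⟩
  exact_mod_cast contDiff_infty_iff_deriv.2 ⟨hdiff, by rw [hd]; exact_mod_cast hh⟩

noncomputable def glue1 (ε t : ℝ) : ℝ := ∫ s in ε..t, expNegInvGlue (s - ε)

noncomputable def glue2 (ε t : ℝ) : ℝ := ∫ s in ε..t, glue1 ε s

lemma glue1_integrand_contDiff (ε : ℝ) :
    ContDiff ℝ (⊤ : ℕ∞) (fun s => expNegInvGlue (s - ε)) :=
  expNegInvGlue.contDiff.comp (contDiff_id.sub contDiff_const)

lemma glue1_contDiff (ε : ℝ) : ContDiff ℝ (⊤ : ℕ∞) (glue1 ε) :=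
  (primitive_facts (glue1_integrand_contDiff ε) ε).1

lemma glue1_deriv (ε : ℝ) : deriv (glue1 ε) = fun t => expNegInvGlue (t - ε) :=
  (primitive_facts (glue1_integrand_contDiff ε) ε).2

lemma glue1_zero {ε t : ℝ} (ht : t ≤ ε) : glue1 ε t = 0 := by
  have h0 : ∫ s in t..ε, expNegInvGlue (s - ε) = 0 := by
    rw [intervalIntegral.integral_congr (g := fun _ => (0 : ℝ))]
    · exact intervalIntegral.integral_zero
    · intro s hs
      rw [Set.uIcc_of_le ht] at hs
      exact expNegInvGlue.zero_of_nonpos (by linarith [hs.2])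
  rw [glue1, intervalIntegral.integral_symm, h0, neg_zero]

lemma glue1_nonneg (ε t : ℝ) : 0 ≤ glue1 ε t := by
  rcases le_total t ε with h | h
  · rw [glue1_zero h]
  · exact intervalIntegral.integral_nonneg h fun u _ => expNegInvGlue.nonneg _

lemma glue1_pos {ε t : ℝ} (h : ε < t) : 0 < glue1 ε t := by
  apply intervalIntegral_pos_of_pos_on
  · exact ((glue1_integrand_contDiff ε).continuous).intervalIntegrable ε t
  · intro s hs
    exact expNegInvGlue.pos_of_pos (by linarith [hs.1])
  · exact h

lemma glue2_contDiff (ε : ℝ) : ContDiff ℝ (⊤ : ℕ∞) (glue2 ε) :=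
  (primitive_facts (glue1_contDiff ε) ε).1

lemma glue2_deriv (ε : ℝ) : deriv (glue2 ε) = glue1 ε :=
  (primitive_facts (glue1_contDiff ε) ε).2

lemma glue2_zero {ε t : ℝ} (ht : t ≤ ε) : glue2 ε t = 0 := by
  have h0 : ∫ s in t..ε, glue1 ε s = 0 := by
    rw [intervalIntegral.integral_congr (g := fun _ => (0 : ℝ))]
    · exact intervalIntegral.integral_zero
    · intro s hs
      rw [Set.uIcc_of_le ht] at hs
      exact glue1_zero hs.2
  rw [glue2, intervalIntegral.integral_symm, h0, neg_zero]

lemma glue2_nonneg (ε t : ℝ) : 0 ≤ glue2 ε t := by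
  rcases le_total t ε with h | h
  · rw [glue2_zero h]
  · exact intervalIntegral.integral_nonneg h fun u _ => glue1_nonneg ε u

lemma glue2_pos {ε t : ℝ} (h : ε < t) : 0 < glue2 ε t := by
  apply intervalIntegral_pos_of_pos_on
  · exact ((glue1_contDiff ε).continuous).intervalIntegrable ε t
  · intro s hs
    exact glue1_pos hs.1
  · exact h

end Glue

section Hull
variable {V : Type*} [NormedAddCommGroup V] [InnerProductSpace ℝ V]
  {p : ℕ} {φ : V [⋀^Fin p]→ₗ[ℝ] ℝ} {U : Set V}

lemma pshHull_subset_U {K : Set V} : PshHull φ U K ⊆ U := fun _ hx => hx.1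

lemma subset_pshHull (hK : K ⊆ U) (hKc : IsCompact K) : K ⊆ PshHull φ U K := by
  intro x hx
  refine ⟨hK hx, fun f hf => le_csSup ?_ ⟨x, hx, rfl⟩⟩
  exact (hKc.image_of_continuousOn (hf.1.continuousOn.mono hK)).bddAbove

lemma pshHull_compact_of_exhaustion (hU : IsOpen U) {f₀ : V → ℝ} (hf₀ : PshOn φ U f₀)
    (hprop : ∀ c : ℝ, IsCompact {x ∈ U | f₀ x ≤ c}) {K : Set V} :
    IsCompact (PshHull φ U K) := by
  set c₀ := sSup (f₀ '' K) with hc₀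
  have hsub : PshHull φ U K ⊆ {x ∈ U | f₀ x ≤ c₀} := fun x hx => ⟨hx.1, hx.2 f₀ hf₀⟩
  have hclosed : IsClosed (PshHull φ U K) := by
    apply isClosed_of_closure_subset
    intro x hxcl
    have hxS : x ∈ {x ∈ U | f₀ x ≤ c₀} :=
      (hprop c₀).isClosed.closure_subset (closure_mono hsub hxcl)
    refine ⟨hxS.1, fun f hf => ?_⟩
    by_contra hlt
    push_neg at hlt
    have hcont : ContinuousAt f x := hf.continuousAt hU hxS.1
    have hmem : f ⁻¹' Set.Ioi (sSup (f '' K)) ∈ nhds x := hcont (Ioi_mem_nhds hlt)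
    obtain ⟨y, hy1, hy2⟩ := mem_closure_iff_nhds.1 hxcl _ hmem
    exact absurd (hy2.2 f hf) (not_le.2 hy1)
  exact IsCompact.of_isClosed_subset (hprop c₀) hclosed hsub

end Hull

section Exhaust
variable {V : Type*} [NormedAddCommGroup V] [InnerProductSpace ℝ V] [FiniteDimensional ℝ V]
  {U : Set V}

open Metric EMetric ENNReal

/-- compact pieces exhausting `U` -/
def exD (U : Set V) (n : ℕ) : Set V :=
  Metric.closedBall 0 n ∩ {x | ENNReal.ofReal (((n : ℝ) + 1)⁻¹) ≤ EMetric.infEdist x Uᶜ}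

/-- open pieces interleaving the `exD` -/
def exW (U : Set V) (n : ℕ) : Set V :=
  Metric.ball 0 ((n : ℝ) + 1) ∩ {x | ENNReal.ofReal (((n : ℝ) + 2)⁻¹) < EMetric.infEdist x Uᶜ}

lemma exD_compact (n : ℕ) : IsCompact (exD U n) := by
  apply (isCompact_closedBall (0 : V) n).inter_right
  exact isClosed_Ici.preimage EMetric.continuous_infEdist

lemma exD_subset_U (hU : IsOpen U) (n : ℕ) : exD U n ⊆ U := by
  intro x hx
  by_contra hxU
  have h0 : EMetric.infEdist x Uᶜ = 0 := EMetric.infEdist_zero_of_mem hxU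
  have := hx.2
  rw [Set.mem_setOf_eq, h0, nonpos_iff_eq_zero, ENNReal.ofReal_eq_zero] at this
  have : (0 : ℝ) < ((n : ℝ) + 1)⁻¹ := by positivity
  linarith [hx.2, this]

lemma exW_open (n : ℕ) : IsOpen (exW U n) :=
  (Metric.isOpen_ball).inter (isOpen_Ioi.preimage EMetric.continuous_infEdist)

lemma exD_subset_exW (n : ℕ) : exD U n ⊆ exW U n := by
  intro x hx
  have h2 : ENNReal.ofReal (((n : ℝ) + 1)⁻¹) ≤ EMetric.infEdist x Uᶜ := hx.2
  constructor
  · exact Metric.closedBall_subset_ball (by linarith) hx.1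
  · refine lt_of_lt_of_le ?_ h2
    apply ENNReal.ofReal_lt_ofReal_iff_of_nonneg (by positivity) |>.2
    rw [inv_lt_inv₀ (by positivity) (by positivity)]
    linarith

lemma exW_subset_exD (n : ℕ) : exW U n ⊆ exD U (n + 1) := by
  intro x hx
  have h2 : ENNReal.ofReal (((n : ℝ) + 2)⁻¹) < EMetric.infEdist x Uᶜ := hx.2
  constructor
  · apply Metric.ball_subset_closedBall.trans (Metric.closedBall_subset_closedBall (by push_cast; linarith)) hx.1
  · refine le_of_lt (lt_of_le_of_lt ?_ h2)
    apply le_of_eq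
    congr 1
    push_cast
    ring

lemma exW_mono : Monotone (exW U) :=
  monotone_nat_of_le_succ fun n => (exW_subset_exD n).trans (exD_subset_exW (n + 1))

lemma exists_exD_mem (hU : IsOpen U) {x : V} (hx : x ∈ U) : ∃ n, x ∈ exD U n := by
  have hpos : 0 < EMetric.infEdist x Uᶜ := by
    refine EMetric.infEdist_pos_iff_notMem_closure.2 ?_
    rw [hU.isClosed_compl.closure_eq]
    simpa using hx
  obtain ⟨δ, hδpos, hδle⟩ : ∃ δ : ℝ, 0 < δ ∧ ENNReal.ofReal δ ≤ EMetric.infEdist x Uᶜ := by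
    rcases eq_or_ne (EMetric.infEdist x Uᶜ) ⊤ with h | h
    · exact ⟨1, one_pos, by simp [h]⟩
    · refine ⟨(EMetric.infEdist x Uᶜ).toReal, ?_, ?_⟩
      · exact ENNReal.toReal_pos hpos.ne' h
      · rw [ENNReal.ofReal_toReal h]
  obtain ⟨n₁, hn₁⟩ := exists_nat_gt (1/δ)
  obtain ⟨n₂, hn₂⟩ := exists_nat_ge ‖x‖
  refine ⟨max n₁ n₂, ?_, ?_⟩
  · simp only [Metric.mem_closedBall, dist_zero_right]
    exact hn₂.trans (by exact_mod_cast Nat.le_max_right n₁ n₂)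
  · refine le_trans ?_ hδle
    apply ENNReal.ofReal_le_ofReal
    have h1 : (n₁ : ℝ) ≤ (max n₁ n₂ : ℕ) := by exact_mod_cast Nat.le_max_left n₁ n₂
    rw [inv_le_iff_one_le_mul₀ (by positivity)]
    have : 1/δ < (max n₁ n₂ : ℕ) + 1 := by linarith
    rw [div_lt_iff₀ hδpos] at this
    nlinarith

lemma compact_subset_exW (hU : IsOpen U) {S : Set V} (hS : IsCompact S) (hSU : S ⊆ U) :
    ∃ n, S ⊆ exW U n := by
  have hcover : S ⊆ ⋃ n, exW U n := by
    intro x hx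
    obtain ⟨n, hn⟩ := exists_exD_mem hU (hSU hx)
    exact Set.mem_iUnion.2 ⟨n, exD_subset_exW n hn⟩
  obtain ⟨t, ht⟩ := hS.elim_finite_subcover (exW U) (fun n => exW_open n) hcover
  refine ⟨t.sup id, fun x hx => ?_⟩
  obtain ⟨i, hi, hxi⟩ := Set.mem_iUnion₂.1 (ht hx)
  exact exW_mono (Finset.le_sup (f := id) hi) hxi

end Exhaust


/-- **Theorem 3.3** (Harvey–Lawson), Euclidean parallel case.  `U` is `φ`-convex (hulls of
compact sets are compact) iff there exists a smooth `φ`-plurisubharmonic proper exhaustion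
function on `U`. -/
theorem phiConvex_iff_exists_psh_exhaustion
    {V : Type*} [NormedAddCommGroup V] [InnerProductSpace ℝ V]
    [FiniteDimensional ℝ V] {p : ℕ} (hp : 1 ≤ p)
    (φ : V [⋀^Fin p]→ₗ[ℝ] ℝ)
    (hcomass : ∀ u : Fin p → V, Orthonormal ℝ u → φ u ≤ 1)
    (U : Set V) (hU : IsOpen U) :
    (∀ K : Set V, K ⊆ U → IsCompact K → IsCompact (PshHull φ U K)) ↔
      ∃ f : V → ℝ, PshOn φ U f ∧ ∀ c : ℝ, IsCompact {x ∈ U | f x ≤ c} := by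
  constructor
  · intro hyp
    classical
    have step : ∀ j m : ℕ, ∃ m' : ℕ,
        PshHull φ U (exD U m) ∪ exD U (j+1) ⊆ exW U m' := by
      intro j m
      have hhc : IsCompact (PshHull φ U (exD U m) ∪ exD U (j+1)) :=
        (hyp _ (exD_subset_U hU m) (exD_compact m)).union (exD_compact (j+1))
      have hsub : PshHull φ U (exD U m) ∪ exD U (j+1) ⊆ U :=
        Set.union_subset pshHull_subset_U (exD_subset_U hU (j+1))
      exact compact_subset_exW hU hhc hsub
    set g : ℕ → ℕ → ℕ := fun j m => Classical.choose (step j m) + 1 with hg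
    set a : ℕ → ℕ := fun n => Nat.rec (motive := fun _ => ℕ) 0 (fun j aj => g j aj) n with ha
    set K : ℕ → Set V := fun j => PshHull φ U (exD U (a j)) with hKdef
    have hspec : ∀ j, K j ∪ exD U (j+1) ⊆ exW U (Classical.choose (step j (a j))) :=
      fun j => Classical.choose_spec (step j (a j))
    have hWD' : ∀ j, exW U (Classical.choose (step j (a j))) ⊆ exD U (a (j+1)) := by
      intro j
      have : a (j+1) = Classical.choose (step j (a j)) + 1 := rfl
      rw [this]
      exact exW_subset_exD _
    have hKc : ∀ j, IsCompact (K j) := fun j => hyp _ (exD_subset_U hU _) (exD_compact _)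
    have hKU : ∀ j, K j ⊆ U := fun _ => pshHull_subset_U
    have hDK : ∀ j, exD U (a j) ⊆ K j := fun j =>
      subset_pshHull (exD_subset_U hU _) (exD_compact _)
    have hKint : ∀ j, K j ⊆ interior (K (j+1)) := by
      intro j
      have h1 : K j ⊆ exW U (Classical.choose (step j (a j))) :=
        Set.subset_union_left.trans (hspec j)
      have h2 : exW U (Classical.choose (step j (a j))) ⊆ K (j+1) :=
        (hWD' j).trans (hDK (j+1))
      exact h1.trans (interior_maximal h2 (exW_open _))
    have hDK' : ∀ j, exD U (j+1) ⊆ K (j+1) := fun j =>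
      (Set.subset_union_right.trans (hspec j)).trans ((hWD' j).trans (hDK (j+1)))
    have hKmono : Monotone K := monotone_nat_of_le_succ fun j => (hKint j).trans interior_subset
    have hcover : ∀ x ∈ U, ∃ j, x ∈ K j := by
      intro x hx
      obtain ⟨n, hn⟩ := exists_exD_mem hU hx
      exact ⟨n+1, hDK' n ((exW_subset_exD n) (exD_subset_exW n hn))⟩
    have hsep : ∀ j, ∀ y ∈ U, y ∉ K j → ∃ gg : V → ℝ, PshOn φ U gg ∧
        (∀ z ∈ K j, gg z ≤ 0) ∧ 0 < gg y := by
      intro j y hyU hyK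
      have hne : ¬ ∀ f : V → ℝ, PshOn φ U f → f y ≤ sSup (f '' exD U (a j)) :=
        fun h => hyK ⟨hyU, h⟩
      push_neg at hne
      obtain ⟨f, hf, hlt⟩ := hne
      exact ⟨fun z => f z - sSup (f '' exD U (a j)), hf.sub_const _,
        fun z hz => sub_nonpos.2 (hz.2 f hf), sub_pos.2 hlt⟩
    have hchi : ∀ j : ℕ, ∃ χ : V → ℝ, PshOn φ U χ ∧ (∀ z, 0 ≤ χ z) ∧ (∀ z ∈ K j, χ z = 0) ∧
        ∀ z ∈ K (j+2) \ interior (K (j+1)), (j : ℝ) ≤ χ z := by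
      intro j
      set A := K (j+2) \ interior (K (j+1)) with hA
      have hAc : IsCompact A := (hKc (j+2)).diff isOpen_interior
      have hAU : A ⊆ U := fun z hz => hKU (j+2) hz.1
      rcases A.eq_empty_or_nonempty with hAe | hAne
      · refine ⟨fun _ => 0, pshOn_zero, fun z => le_refl 0, fun z _ => rfl, ?_⟩
        intro z hz
        rw [hAe] at hz
        exact absurd hz (Set.notMem_empty z)
      · have hpt : ∀ y : V, y ∈ A → ∃ θ : V → ℝ, ∃ W0 : Set V, PshOn φ U θ ∧
            (∀ z, 0 ≤ θ z) ∧ (∀ z ∈ K j, θ z = 0) ∧ IsOpen W0 ∧ y ∈ W0 ∧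
            ∀ z ∈ W0, 0 < θ z := by
          intro y hy
          have hyU : y ∈ U := hAU hy
          have hyK : y ∉ K j := fun h => hy.2 (hKint j h)
          obtain ⟨gg, hgg, hgg0, hggy⟩ := hsep j y hyU hyK
          set ε := gg y / 2 with hε
          have hεpos : 0 < ε := by rw [hε]; linarith
          refine ⟨fun z => glue2 ε (gg z), U ∩ gg ⁻¹' Set.Ioi ε,
            hgg.comp hU (glue2_contDiff ε) ?_ ?_, fun z => glue2_nonneg ε _, ?_, ?_, ?_, ?_⟩
          · intro t; rw [glue2_deriv]; exact glue1_nonneg ε t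
          · intro t; rw [glue2_deriv, glue1_deriv]; exact expNegInvGlue.nonneg _
          · intro z hz; exact glue2_zero (le_trans (hgg0 z hz) hεpos.le)
          · exact hgg.1.continuousOn.isOpen_inter_preimage hU isOpen_Ioi
          · refine ⟨hyU, ?_⟩
            simp only [Set.mem_preimage, Set.mem_Ioi]
            rw [hε]; linarith
          · intro z hz; exact glue2_pos hz.2
        have hpt' : ∀ y : {z : V // z ∈ A}, ∃ θ : V → ℝ, ∃ W0 : Set V, PshOn φ U θ ∧
            (∀ z, 0 ≤ θ z) ∧ (∀ z ∈ K j, θ z = 0) ∧ IsOpen W0 ∧ (y : V) ∈ W0 ∧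
            ∀ z ∈ W0, 0 < θ z := fun y => hpt y.1 y.2
        choose θ W0 hθpsh hθnn hθK hWo hWm hWpos using hpt'
        have hcov : A ⊆ ⋃ y : {z : V // z ∈ A}, W0 y := fun z hz =>
          Set.mem_iUnion.2 ⟨⟨z, hz⟩, hWm ⟨z, hz⟩⟩
        obtain ⟨t, ht⟩ := hAc.elim_finite_subcover W0 hWo hcov
        set χ₀ : V → ℝ := fun z => ∑ i ∈ t, θ i z with hχ₀
        have hχ₀psh : PshOn φ U χ₀ := pshOn_sum hU t _ fun i _ => hθpsh i
        have hχ₀nn : ∀ z, 0 ≤ χ₀ z := fun z => Finset.sum_nonneg fun i _ => hθnn i z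
        have hχ₀K : ∀ z ∈ K j, χ₀ z = 0 := fun z hz => Finset.sum_eq_zero fun i _ => hθK i z hz
        have hχ₀pos : ∀ z ∈ A, 0 < χ₀ z := by
          intro z hz
          obtain ⟨i, hi, hzi⟩ := Set.mem_iUnion₂.1 (ht hz)
          exact Finset.sum_pos' (fun i _ => hθnn i z) ⟨i, hi, hWpos i z hzi⟩
        obtain ⟨y₀, hy₀A, hy₀min⟩ := hAc.exists_isMinOn hAne (hχ₀psh.1.continuousOn.mono hAU)
        have hmpos : 0 < χ₀ y₀ := hχ₀pos y₀ hy₀A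
        refine ⟨fun z => ((j : ℝ) / χ₀ y₀) * χ₀ z,
          hχ₀psh.const_smul hU (div_nonneg (Nat.cast_nonneg j) hmpos.le),
          fun z => mul_nonneg (div_nonneg (Nat.cast_nonneg j) hmpos.le) (hχ₀nn z),
          fun z hz => by show ((j:ℝ) / χ₀ y₀) * χ₀ z = 0; rw [hχ₀K z hz, mul_zero], ?_⟩
        intro z hzA
        have h1 : χ₀ y₀ ≤ χ₀ z := hy₀min hzA
        calc (j : ℝ) = ((j:ℝ) / χ₀ y₀) * χ₀ y₀ := by field_simp
          _ ≤ ((j:ℝ) / χ₀ y₀) * χ₀ z :=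
              mul_le_mul_of_nonneg_left h1 (div_nonneg (Nat.cast_nonneg j) hmpos.le)
    choose χ hχpsh hχnn hχK hχA using hchi
    set f : V → ℝ := fun x => ∑' j, χ j x with hfdef
    have hrep : ∀ n : ℕ, ∀ x ∈ interior (K n), f x = ∑ j ∈ Finset.range n, χ j x := by
      intro n x hx
      apply tsum_eq_sum
      intro j hj
      have hnj : n ≤ j := le_of_not_gt fun h => hj (Finset.mem_range.2 h)
      exact hχK j x (hKmono hnj (interior_subset hx))
    have hmemint : ∀ x ∈ U, ∃ n, x ∈ interior (K n) := by
      intro x hx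
      obtain ⟨m, hm⟩ := hcover x hx
      exact ⟨m+1, hKint m hm⟩
    have hfpsh : PshOn φ U f := by
      constructor
      · intro x hx
        obtain ⟨n, hn⟩ := hmemint x hx
        have hg' : ContDiffAt ℝ (⊤:ℕ∞) (fun z => ∑ j ∈ Finset.range n, χ j z) x :=
          (pshOn_sum hU (Finset.range n) _ fun i _ => hχpsh i).1.contDiffAt (hU.mem_nhds hx)
        have hev : f =ᶠ[nhds x] (fun z => ∑ j ∈ Finset.range n, χ j z) := by
          filter_upwards [isOpen_interior.mem_nhds hn] with z hz using hrep n z hz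
        exact (hg'.congr_of_eventuallyEq hev).contDiffWithinAt
      · intro x hx e he hφe
        obtain ⟨n, hn⟩ := hmemint x hx
        have hev : f =ᶠ[nhds x] (fun z => ∑ j ∈ Finset.range n, χ j z) := by
          filter_upwards [isOpen_interior.mem_nhds hn] with z hz using hrep n z hz
        rw [fderiv2_congr hev]
        exact (pshOn_sum hU (Finset.range n) _ fun i _ => hχpsh i).2 x hx e he hφe
    have hchi_le_f : ∀ (k : ℕ) (x : V), x ∈ U → χ k x ≤ f x := by
      intro k x hx
      obtain ⟨n, hn⟩ := hmemint x hx
      have hn' : x ∈ interior (K (max n (k+1))) :=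
        interior_mono (hKmono (le_max_left n (k+1))) hn
      rw [hrep _ x hn']
      exact Finset.single_le_sum (fun i _ => hχnn i x)
        (Finset.mem_range.2 (Nat.lt_of_lt_of_le (Nat.lt_succ_self k) (le_max_right n (k+1))))
    have hlow : ∀ (j : ℕ) (x : V), x ∈ U → x ∉ interior (K (j+1)) → (j:ℝ) ≤ f x := by
      intro j x hx hxint
      have hex : ∃ m, x ∈ K m := hcover x hx
      have hxK : x ∈ K (Nat.find hex) := Nat.find_spec hex
      have hmin : ∀ k, k < Nat.find hex → x ∉ K k := fun k hk => Nat.find_min hex hk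
      rcases le_or_gt (Nat.find hex) (j+1) with hle | hgt
      · have hxK1 : x ∈ K (j+2) := hKmono (le_trans hle (Nat.le_succ _)) hxK
        have h1 : (j:ℝ) ≤ χ j x := hχA j x ⟨hxK1, hxint⟩
        exact h1.trans (hchi_le_f j x hx)
      · set i := Nat.find hex - 2 with hi
        have hm2 : Nat.find hex = i + 2 := by omega
        have hx2 : x ∈ K (i+2) := by rw [← hm2]; exact hxK
        have hxnint : x ∉ interior (K (i+1)) := by
          intro hcon
          exact hmin (i+1) (by omega) (interior_subset hcon)
        have h1 : (i:ℝ) ≤ χ i x := hχA i x ⟨hx2, hxnint⟩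
        have h2 : (j:ℝ) ≤ (i:ℝ) := by exact_mod_cast (by omega : j ≤ i)
        exact h2.trans (h1.trans (hchi_le_f i x hx))
    refine ⟨f, hfpsh, ?_⟩
    intro c
    obtain ⟨j, hj⟩ := exists_nat_gt c
    have hsub : {x ∈ U | f x ≤ c} ⊆ K (j+1) := by
      intro x hx
      by_contra hxK
      have hxint : x ∉ interior (K (j+1)) := fun h => hxK (interior_subset h)
      have := hlow j x hx.1 hxint
      have := hx.2
      linarith [hlow j x hx.1 hxint, hx.2]
    have hclosed : IsClosed {x ∈ U | f x ≤ c} := by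
      apply isClosed_of_closure_subset
      intro x hxcl
      have hxK : x ∈ K (j+1) := (hKc (j+1)).isClosed.closure_subset (closure_mono hsub hxcl)
      have hxU : x ∈ U := hKU (j+1) hxK
      refine ⟨hxU, ?_⟩
      by_contra hlt
      push_neg at hlt
      have hcont : ContinuousAt f x := hfpsh.continuousAt hU hxU
      have hmem : f ⁻¹' Set.Ioi c ∈ nhds x := hcont (Ioi_mem_nhds hlt)
      obtain ⟨y, hy1, hy2⟩ := mem_closure_iff_nhds.1 hxcl _ hmem
      exact absurd hy2.2 (not_le.2 hy1)
    exact IsCompact.of_isClosed_subset (hKc (j+1)) hclosed hsub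
  · rintro ⟨f₀, hf₀, hprop⟩ K hKU hKc
    exact pshHull_compact_of_exhaustion hU hf₀ hprop
end
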